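/- arXiv:1707.07502 — 5 statements merged into one kernel-verified Lean document; each statement's English description precedes it below -/
import Mathlib

section
/- Let A be a centrally symmetric convex polygon in R² with 2n vertices (indices mod 2n, x_{k+n} = -x_k), n ≥ 4, and fix k. Let T₁(x_{k-1}) be the triangle with vertices x_{k-1}, x_k, x_{k+n-2}, and let T₂(x_k) be the triangle with vertices x_{k-1}, x_k, x_{k+1}. Then area(T₁(x_{k-1})) > area(T₂(x_k)). -/
open MeasureTheory Set

noncomputable def polarSet {d : ℕ} (A : Set (EuclideanSpace ℝ (Fin d))) :
    Set (EuclideanSpace ℝ (Fin d)) :=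
  {x | ∀ a ∈ A, inner ℝ x a ≤ (1 : ℝ)}

/-- The area (2-dimensional Lebesgue measure) of a subset of the plane. -/
noncomputable def area (S : Set (EuclideanSpace ℝ (Fin 2))) : ℝ :=
  (MeasureTheory.volume S).toReal

/-- The points `x 0, x 1, ..., x (m-1)` are the vertices, in cyclic order, of a convex
polygon: every vertex lies strictly to the left of every directed edge it does not belong to. -/
def IsConvexCyclic {m : ℕ} (x : ZMod m → EuclideanSpace ℝ (Fin 2)) : Prop :=
  ∀ k : ZMod m, ∀ p ∈ Set.range x, p ≠ x k → p ≠ x (k + 1) →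
    0 < (x (k + 1) - x k) 0 * (p - x k) 1 - (x (k + 1) - x k) 1 * (p - x k) 0

open scoped Pointwise

namespace Stmt8Aux

abbrev E2 := EuclideanSpace ℝ (Fin 2)

noncomputable def stdTri : Set E2 :=
  convexHull ℝ {0, EuclideanSpace.single 0 1, EuclideanSpace.single 1 1}

lemma mem_stdTri {v : E2} (h0 : 0 ≤ v 0) (h1 : 0 ≤ v 1) (hs : v 0 + v 1 ≤ 1) :
    v ∈ stdTri := by
  have key := Finset.centerMass_mem_convexHull (t := (Finset.univ : Finset (Fin 3)))
    (w := ![1 - v 0 - v 1, v 0, v 1])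
    (z := ![0, EuclideanSpace.single 0 1, EuclideanSpace.single 1 1])
    (s := ({0, EuclideanSpace.single 0 1, EuclideanSpace.single 1 1} : Set E2))
    (by intro i _; fin_cases i <;> simp <;> linarith)
    (by simp [Fin.sum_univ_three]; linarith)
    (by intro i _; fin_cases i <;> simp)
  have hcm : (Finset.univ : Finset (Fin 3)).centerMass
      ![1 - v 0 - v 1, v 0, v 1]
      ![0, EuclideanSpace.single 0 1, EuclideanSpace.single 1 1] = v := by
    rw [Finset.centerMass]
    have hsum : ∑ i : Fin 3, (![1 - v 0 - v 1, v 0, v 1]) i = 1 := by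
      simp [Fin.sum_univ_three]; ring
    rw [hsum]
    ext i
    fin_cases i <;>
      simp [Fin.sum_univ_three, EuclideanSpace.single_apply, PiLp.add_apply,
        PiLp.smul_apply, PiLp.zero_apply, smul_eq_mul]
  rw [hcm] at key
  exact key

lemma abs_coord_le_dist (v w : E2) (i : Fin 2) : |v i - w i| ≤ dist v w := by
  rw [EuclideanSpace.dist_eq]
  simp only [Real.dist_eq]
  rw [← Real.sqrt_sq_eq_abs]
  apply Real.sqrt_le_sqrt
  have : (v i - w i) ^ 2 ≤ ∑ j : Fin 2, |v j - w j| ^ 2 := by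
    apply Finset.single_le_sum (f := fun j => |v j - w j| ^ 2)
      (fun j _ => by positivity) (Finset.mem_univ i) |>.trans_eq' ?_
    rw [sq_abs]
  simpa [sq_abs] using this

noncomputable def ctr : E2 := (WithLp.equiv 2 (Fin 2 → ℝ)).symm ![(1:ℝ)/4, 1/4]

lemma ball_subset_stdTri : Metric.ball ctr (1/8) ⊆ stdTri := by
  intro v hv
  rw [Metric.mem_ball] at hv
  have h0 := (abs_coord_le_dist v ctr 0).trans_lt hv
  have h1 := (abs_coord_le_dist v ctr 1).trans_lt hv
  have hc0 : ctr 0 = 1/4 := rfl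
  have hc1 : ctr 1 = 1/4 := rfl
  rw [hc0, abs_lt] at h0
  rw [hc1, abs_lt] at h1
  exact mem_stdTri (by linarith) (by linarith) (by linarith)

lemma volume_stdTri_pos : 0 < volume stdTri :=
  lt_of_lt_of_le (Metric.measure_ball_pos volume ctr (by norm_num)) (measure_mono ball_subset_stdTri)

lemma volume_stdTri_lt_top : volume stdTri < ⊤ := by
  have hfin : ({0, EuclideanSpace.single 0 1, EuclideanSpace.single 1 1} : Set E2).Finite := by
    apply Set.Finite.insert; apply Set.Finite.insert; exact Set.finite_singleton _
  exact (hfin.isCompact_convexHull (𝕜 := ℝ)).measure_lt_top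

/-- The linear map sending `e₀ ↦ u`, `e₁ ↦ w`. -/
noncomputable def lmap (u w : E2) : E2 →ₗ[ℝ] E2 where
  toFun v := v 0 • u + v 1 • w
  map_add' a b := by
    show ((a + b) 0) • u + ((a + b) 1) • w = _
    rw [PiLp.add_apply, PiLp.add_apply, add_smul, add_smul]
    abel
  map_smul' c a := by
    show ((c • a) 0) • u + ((c • a) 1) • w = c • (a 0 • u + a 1 • w)
    rw [PiLp.smul_apply, PiLp.smul_apply, smul_add, smul_smul, smul_smul]
    simp [smul_eq_mul]

lemma lmap_e0 (u w : E2) : lmap u w (EuclideanSpace.single 0 1) = u := by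
  show (EuclideanSpace.single (0:Fin 2) (1:ℝ)) 0 • u
      + (EuclideanSpace.single (0:Fin 2) (1:ℝ)) 1 • w = u
  simp [EuclideanSpace.single_apply]

lemma lmap_e1 (u w : E2) : lmap u w (EuclideanSpace.single 1 1) = w := by
  show (EuclideanSpace.single (1:Fin 2) (1:ℝ)) 0 • u
      + (EuclideanSpace.single (1:Fin 2) (1:ℝ)) 1 • w = w
  simp [EuclideanSpace.single_apply]

lemma det_lmap (u w : E2) : LinearMap.det (lmap u w) = u 0 * w 1 - u 1 * w 0 := by
  rw [← LinearMap.det_toMatrix (EuclideanSpace.basisFun (Fin 2) ℝ).toBasis]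
  rw [Matrix.det_fin_two]
  have h00 : LinearMap.toMatrix (EuclideanSpace.basisFun (Fin 2) ℝ).toBasis
      (EuclideanSpace.basisFun (Fin 2) ℝ).toBasis (lmap u w) 0 0 = u 0 := by
    rw [LinearMap.toMatrix_apply]
    simp [EuclideanSpace.basisFun_apply, lmap_e0]
  have h10 : LinearMap.toMatrix (EuclideanSpace.basisFun (Fin 2) ℝ).toBasis
      (EuclideanSpace.basisFun (Fin 2) ℝ).toBasis (lmap u w) 1 0 = u 1 := by
    rw [LinearMap.toMatrix_apply]
    simp [EuclideanSpace.basisFun_apply, lmap_e0]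
  have h01 : LinearMap.toMatrix (EuclideanSpace.basisFun (Fin 2) ℝ).toBasis
      (EuclideanSpace.basisFun (Fin 2) ℝ).toBasis (lmap u w) 0 1 = w 0 := by
    rw [LinearMap.toMatrix_apply]
    simp [EuclideanSpace.basisFun_apply, lmap_e1]
  have h11 : LinearMap.toMatrix (EuclideanSpace.basisFun (Fin 2) ℝ).toBasis
      (EuclideanSpace.basisFun (Fin 2) ℝ).toBasis (lmap u w) 1 1 = w 1 := by
    rw [LinearMap.toMatrix_apply]
    simp [EuclideanSpace.basisFun_apply, lmap_e1]
  rw [h00, h10, h01, h11]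
  ring

lemma triangle_eq_image (P Q R : E2) :
    convexHull ℝ {P, Q, R} = P +ᵥ (lmap (Q - P) (R - P) '' stdTri) := by
  unfold stdTri
  rw [(lmap (Q - P) (R - P)).image_convexHull, ← convexHull_vadd]
  congr 1
  rw [Set.image_insert_eq, Set.image_insert_eq, Set.image_singleton, map_zero, lmap_e0, lmap_e1,
    ← Set.image_vadd, Set.image_insert_eq, Set.image_insert_eq, Set.image_singleton]
  have e0 : P +ᵥ (0 : E2) = P := by simp
  have e1 : P +ᵥ (Q - P) = Q := by show P + (Q - P) = Q; abel
  have e2 : P +ᵥ (R - P) = R := by show P + (R - P) = R; abel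
  rw [e0, e1, e2]

lemma volume_triangle (P Q R : E2) :
    volume (convexHull ℝ {P, Q, R}) =
      ENNReal.ofReal |(Q-P) 0 * (R-P) 1 - (Q-P) 1 * (R-P) 0| * volume stdTri := by
  rw [triangle_eq_image P Q R, measure_vadd,
    MeasureTheory.Measure.addHaar_image_linearMap, det_lmap]

lemma area_triangle (P Q R : E2) :
    area (convexHull ℝ {P, Q, R}) =
      |(Q-P) 0 * (R-P) 1 - (Q-P) 1 * (R-P) 0| * (volume stdTri).toReal := by
  rw [area, volume_triangle, ENNReal.toReal_mul, ENNReal.toReal_ofReal (abs_nonneg _)]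

end Stmt8Aux

open Stmt8Aux in
/-- In a centrally symmetric convex 2n-gon with n ≥ 4, the triangle with vertices
x (k-1), x k, x (k+n-2) has strictly greater area than the triangle with vertices
x (k-1), x k, x (k+1). -/
theorem stmt8 (n : ℕ) (hn : 4 ≤ n)
    (x : ZMod (2 * n) → EuclideanSpace ℝ (Fin 2))
    (hinj : Function.Injective x)
    (hanti : ∀ k, x (k + (n : ZMod (2 * n))) = -x k)
    (hcyc : IsConvexCyclic x) (k : ZMod (2 * n)) :
    area (convexHull ℝ {x (k - 1), x k, x (k + 1)}) <
      area (convexHull ℝ {x (k - 1), x k, x (k + (n : ZMod (2 * n)) - 2)}) := by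
  haveI : NeZero (2 * n) := ⟨by omega⟩
  have hne0 : ∀ m : ℕ, 0 < m → m < 2 * n → ((m : ZMod (2 * n)) ≠ 0) := by
    intro m hm1 hm2 h
    rw [ZMod.natCast_eq_zero_iff] at h
    have := Nat.le_of_dvd hm1 h
    omega
  have hxne : ∀ i j : ZMod (2 * n), ∀ m : ℕ, 0 < m → m < 2 * n →
      i - j = (m : ZMod (2 * n)) → x i ≠ x j := by
    intro i j m h1 h2 hd h
    have hij := hinj h
    apply hne0 m h1 h2
    rw [← hd, hij, sub_self]
  have hn1 : ((n - 1 : ℕ) : ZMod (2 * n)) = (n : ZMod (2 * n)) - 1 := by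
    push_cast [Nat.cast_sub (by omega : 1 ≤ n)]; ring
  have hn2 : ((n - 2 : ℕ) : ZMod (2 * n)) = (n : ZMod (2 * n)) - 2 := by
    push_cast [Nat.cast_sub (by omega : 2 ≤ n)]; ring
  have hn3 : ((n - 3 : ℕ) : ZMod (2 * n)) = (n : ZMod (2 * n)) - 3 := by
    push_cast [Nat.cast_sub (by omega : 3 ≤ n)]; ring
  set a := x (k - 1) with ha
  set b := x k with hb
  set c := x (k + 1) with hc
  set d := x (k - 2) with hd
  have hk1 : (k - 1) + 1 = k := by ring
  have hk2 : (k - 2) + 1 = k - 1 := by ring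
  have hantic : x (k + 1 + (n : ZMod (2 * n))) = -c := hanti (k + 1)
  have hantia : x (k - 1 + (n : ZMod (2 * n))) = -a := hanti (k - 1)
  have hantid : x (k + (n : ZMod (2 * n)) - 2) = -d := by
    have h := hanti (k - 2)
    rw [show (k - 2) + (n : ZMod (2 * n)) = k + (n : ZMod (2 * n)) - 2 by ring] at h
    exact h
  have hA1 : 0 < (b - a) 0 * (c - a) 1 - (b - a) 1 * (c - a) 0 := by
    have h := hcyc (k - 1) (x (k + 1)) ⟨_, rfl⟩
      (hxne _ _ 2 (by norm_num) (by omega) (by push_cast; ring))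
      (by rw [hk1]; exact hxne _ _ 1 (by norm_num) (by omega) (by push_cast; ring))
    rwa [hk1] at h
  have hA5 : 0 < (b - a) 0 * (-c - a) 1 - (b - a) 1 * (-c - a) 0 := by
    have h := hcyc (k - 1) (x (k + 1 + (n : ZMod (2 * n)))) ⟨_, rfl⟩
      (hxne _ _ (n + 2) (by omega) (by omega) (by push_cast; ring))
      (by rw [hk1]; exact hxne _ _ (n + 1) (by omega) (by omega) (by push_cast; ring))
    rwa [hk1, hantic] at h
  have hA6 : 0 < (b - a) 0 * (-d - a) 1 - (b - a) 1 * (-d - a) 0 := by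
    have h := hcyc (k - 1) (x (k + (n : ZMod (2 * n)) - 2)) ⟨_, rfl⟩
      (hxne _ _ (n - 1) (by omega) (by omega) (by rw [hn1]; ring))
      (by rw [hk1]; exact hxne _ _ (n - 2) (by omega) (by omega) (by rw [hn2]; ring))
    rwa [hk1, hantid] at h
  have hB3 : 0 < (c - b) 0 * (-a - b) 1 - (c - b) 1 * (-a - b) 0 := by
    have h := hcyc k (x (k - 1 + (n : ZMod (2 * n)))) ⟨_, rfl⟩
      (hxne _ _ (n - 1) (by omega) (by omega) (by rw [hn1]; ring))
      (hxne _ _ (n - 2) (by omega) (by omega) (by rw [hn2]; ring))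
    rwa [hantia] at h
  have hB5 : 0 < (c - b) 0 * (-d - b) 1 - (c - b) 1 * (-d - b) 0 := by
    have h := hcyc k (x (k + (n : ZMod (2 * n)) - 2)) ⟨_, rfl⟩
      (hxne _ _ (n - 2) (by omega) (by omega) (by rw [hn2]; ring))
      (hxne _ _ (n - 3) (by omega) (by omega) (by rw [hn3]; ring))
    rwa [hantid] at h
  have hC5 : 0 < (a - d) 0 * (-c - d) 1 - (a - d) 1 * (-c - d) 0 := by
    have h := hcyc (k - 2) (x (k + 1 + (n : ZMod (2 * n)))) ⟨_, rfl⟩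
      (hxne _ _ (n + 3) (by omega) (by omega) (by push_cast; ring))
      (by rw [hk2]; exact hxne _ _ (n + 2) (by omega) (by omega) (by push_cast; ring))
    rwa [hk2, hantic] at h
  rw [area_triangle, area_triangle, hantid]
  have hcpos : 0 < (volume stdTri).toReal :=
    ENNReal.toReal_pos (ne_of_gt volume_stdTri_pos) (ne_of_lt volume_stdTri_lt_top)
  apply mul_lt_mul_of_pos_right _ hcpos
  rw [abs_of_pos hA1, abs_of_pos hA6]
  simp only [PiLp.sub_apply, PiLp.neg_apply] at hA1 hA5 hA6 hB3 hB5 hC5 ⊢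
  nlinarith [mul_pos hA1 hC5, mul_pos hA5 hB5, hB3, mul_pos hA5 hC5, mul_pos hA1 hB5]
end

section
/- Let A be a centrally symmetric convex polygon in R² with 2n edges, n ≥ 3. For an edge s let P₁(s) be the convex hull of s ∪ (-s), and for a vertex x with cyclic neighbours x-1, x+1 let P₂(x) be the convex hull of x-1, x+1, -(x-1), -(x+1). Then ∑_{s ∈ E(A)} area(P₁(s)) ≤ ∑_{x ∈ V(A)} area(P₂(x)), with equality if and only if n = 3. -/
open MeasureTheory Set

set_option linter.unusedSectionVars false
set_option linter.unusedTactic false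

open Pointwise

namespace S9

abbrev E2 := EuclideanSpace ℝ (Fin 2)

noncomputable def cross (u v : EuclideanSpace ℝ (Fin 2)) : ℝ := u 0 * v 1 - u 1 * v 0

lemma areaHull (a b : EuclideanSpace ℝ (Fin 2)) :
    area (convexHull ℝ {a, b, -a, -b}) = 2 * |cross a b| := by
  classical
  have hsum : (∑ i, ({0, (![a + b, a - b] : Fin 2 → E2) i} : Set E2))
      = ({0, a + b} : Set E2) + {0, a - b} := by
    rw [Fin.sum_univ_two]; simp
  have hset : ((-a) +ᵥ (∑ i, ({0, (![a + b, a - b] : Fin 2 → E2) i} : Set E2)))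
      = {a, b, -a, -b} := by
    rw [hsum]
    ext z
    simp only [Set.mem_vadd_set, Set.mem_add, Set.mem_insert_iff, Set.mem_singleton_iff,
      vadd_eq_add]
    constructor
    · rintro ⟨y, ⟨p, (rfl | rfl), q, (rfl | rfl), rfl⟩, rfl⟩
      · refine Or.inr (Or.inr (Or.inl ?_)); abel
      · refine Or.inr (Or.inr (Or.inr ?_)); abel
      · refine Or.inr (Or.inl ?_); abel
      · refine Or.inl ?_; abel
    · rintro (h | h | h | h)
      · exact ⟨(a + b) + (a - b), ⟨a + b, Or.inr rfl, a - b, Or.inr rfl, rfl⟩, by rw [h]; abel⟩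
      · exact ⟨a + b, ⟨a + b, Or.inr rfl, 0, Or.inl rfl, by abel⟩, by rw [h]; abel⟩
      · exact ⟨0, ⟨0, Or.inl rfl, 0, Or.inl rfl, by abel⟩, by rw [h]; abel⟩
      · exact ⟨a - b, ⟨0, Or.inl rfl, a - b, Or.inr rfl, by abel⟩, by rw [h]; abel⟩
  have hhull : convexHull ℝ ({a, b, -a, -b} : Set E2)
      = (-a) +ᵥ parallelepiped (![a + b, a - b] : Fin 2 → E2) := by
    rw [parallelepiped_eq_convexHull, ← convexHull_vadd, hset]
  -- volume of the parallelepiped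
  set B := EuclideanSpace.basisFun (Fin 2) ℝ with hB
  set f : E2 →ₗ[ℝ] E2 := B.toBasis.constr ℝ (![a + b, a - b] : Fin 2 → E2) with hf
  have himg : parallelepiped (![a + b, a - b] : Fin 2 → E2) = f '' parallelepiped (⇑B) := by
    rw [image_parallelepiped]
    have hcomp : ⇑f ∘ ⇑B = (![a + b, a - b] : Fin 2 → E2) := by
      funext i
      show f (B i) = _
      conv_lhs => rw [← B.coe_toBasis]
      exact B.toBasis.constr_basis ℝ _ i
    rw [hcomp]
  have hdet : LinearMap.det f = - 2 * cross a b := by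
    rw [← LinearMap.det_toMatrix B.toBasis f]
    rw [Matrix.det_fin_two]
    simp only [LinearMap.toMatrix_apply, hf]
    rw [B.toBasis.constr_basis, B.toBasis.constr_basis]
    simp only [OrthonormalBasis.coe_toBasis_repr_apply, EuclideanSpace.basisFun_repr, hB]
    simp only [Matrix.cons_val_zero, Matrix.cons_val_one, Matrix.head_cons, cross,
      PiLp.add_apply, PiLp.sub_apply]
    ring
  have hvol : MeasureTheory.volume (convexHull ℝ ({a, b, -a, -b} : Set E2))
      = ENNReal.ofReal (2 * |cross a b|) := by
    rw [hhull, himg]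
    rw [measure_vadd]
    rw [MeasureTheory.Measure.addHaar_image_linearMap, B.volume_parallelepiped, mul_one, hdet]
    congr 1
    rw [abs_mul]
    norm_num
  rw [area, hvol, ENNReal.toReal_ofReal (by positivity)]

lemma cfalse {n : ℕ} (a b : ℕ) (ha : a < 2*n) (hb : b < 2*n) (hab : a ≠ b)
    (h : (a : ZMod (2*n)) = b) : False := by
  have : NeZero (2*n) := ⟨by omega⟩
  rw [ZMod.natCast_eq_natCast_iff] at h
  unfold Nat.ModEq at h
  rw [Nat.mod_eq_of_lt ha, Nat.mod_eq_of_lt hb] at h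
  exact hab h

section Geom
variable {n : ℕ} (hn : 3 ≤ n) (x : ZMod (2*n) → EuclideanSpace ℝ (Fin 2))
  (hinj : Function.Injective x)
  (hanti : ∀ k, x (k + (n : ZMod (2 * n))) = -x k)
  (hcyc : IsConvexCyclic x)

include x hinj hcyc

lemma hcyc' (k p : ZMod (2*n)) (h1 : p ≠ k) (h2 : p ≠ k + 1) :
    0 < cross (x (k+1) - x k) (x p - x k) :=
  hcyc k (x p) ⟨p, rfl⟩ (fun h => h1 (hinj h)) (fun h => h2 (hinj h))

lemma lmin' (k p : ZMod (2*n)) (h1 : p ≠ k) (h2 : p ≠ k + 1) :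
    cross (x (k+1) - x k) (x (k+1)) < cross (x (k+1) - x k) (x p) := by
  have h := hcyc' x hinj hcyc k p h1 h2
  have e : cross (x (k+1) - x k) (x p - x k)
      = cross (x (k+1) - x k) (x p) - cross (x (k+1) - x k) (x (k+1)) := by
    simp only [cross, PiLp.sub_apply]; ring
  rw [e] at h; linarith

include hn

lemma tpos (k : ZMod (2*n)) :
    0 < cross (x (k+1) - x k) (x (k+1+1) - x (k+1)) := by
  have h := hcyc' x hinj hcyc k (k+1+1)
    (fun h => cfalse (n := n) 2 0 (by omega) (by omega) (by omega)
      (by push_cast; linear_combination h))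
    (fun h => cfalse (n := n) 1 0 (by omega) (by omega) (by omega)
      (by push_cast; linear_combination h))
  have e : cross (x (k+1) - x k) (x (k+1+1) - x k)
      = cross (x (k+1) - x k) (x (k+1+1) - x (k+1)) := by
    simp only [cross, PiLp.sub_apply]; ring
  rw [e] at h; exact h

include hanti

lemma lmax' (k p : ZMod (2*n)) (h1 : p + (n : ZMod (2*n)) ≠ k)
    (h2 : p + (n : ZMod (2*n)) ≠ k + 1) :
    cross (x (k+1) - x k) (x p) < - cross (x (k+1) - x k) (x (k+1)) := by
  have h := lmin' x hinj hcyc k (p + (n : ZMod (2*n))) h1 h2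
  rw [hanti p] at h
  have e : cross (x (k+1) - x k) (-x p) = - cross (x (k+1) - x k) (x p) := by
    simp only [cross, PiLp.neg_apply]; ring
  rw [e] at h; linarith

lemma hh_neg (k : ZMod (2*n)) : cross (x (k+1) - x k) (x (k+1)) < 0 := by
  have h := lmin' x hinj hcyc k (k + 1 + (n : ZMod (2*n)))
    (fun h => cfalse (n := n) (a := n+1) (b := 0) (by omega) (by omega) (by omega)
      (by push_cast; linear_combination h))
    (fun h => cfalse (n := n) (a := n) (b := 0) (by omega) (by omega) (by omega)
      (by push_cast; linear_combination h))
  rw [hanti (k+1)] at h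
  have e : cross (x (k+1) - x k) (-x (k+1)) = - cross (x (k+1) - x k) (x (k+1)) := by
    simp only [cross, PiLp.neg_apply]; ring
  rw [e] at h; linarith

lemma cpos (k : ZMod (2*n)) : 0 < cross (x k) (x (k+1)) := by
  have h := hh_neg hn x hinj hanti hcyc k
  have e : cross (x (k+1) - x k) (x (k+1)) = - cross (x k) (x (k+1)) := by
    simp only [cross, PiLp.sub_apply]; ring
  rw [e] at h; linarith

lemma epos (k : ZMod (2*n)) : 0 < cross (x (k-1)) (x (k+1)) := by
  have h1 := hcyc' x hinj hcyc k ((k-1) + (n : ZMod (2*n)))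
    (fun h => cfalse (n := n) n 1 (by omega) (by omega) (by omega)
      (by push_cast; linear_combination h))
    (fun h => cfalse (n := n) n 2 (by omega) (by omega) (by omega)
      (by push_cast; linear_combination h))
  rw [hanti (k-1)] at h1
  have h2 := hcyc' x hinj hcyc (k-1) ((k+1) + (n : ZMod (2*n)))
    (fun h => cfalse (n := n) (n+2) 0 (by omega) (by omega) (by omega)
      (by push_cast; linear_combination h))
    (fun h => cfalse (n := n) (n+1) 0 (by omega) (by omega) (by omega)
      (by push_cast; linear_combination h))
  rw [hanti (k+1), sub_add_cancel] at h2
  have E1 : cross (x (k+1) - x k) (-x (k-1) - x k)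
      = cross (x (k-1)) (x (k+1)) + cross (x k) (x (k+1)) - cross (x (k-1)) (x k) := by
    simp only [cross, PiLp.sub_apply, PiLp.neg_apply]; ring
  have E2 : cross (x k - x (k-1)) (-x (k+1) - x (k-1))
      = cross (x (k-1)) (x (k+1)) - cross (x k) (x (k+1)) + cross (x (k-1)) (x k) := by
    simp only [cross, PiLp.sub_apply, PiLp.neg_apply]; ring
  rw [E1] at h1; rw [E2] at h2; linarith

lemma claimC : ∀ i : ℕ, 1 ≤ i → i ≤ n - 1 → ∀ k : ZMod (2*n),
    0 < cross (x (k+1) - x k)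
        (x (k + (i : ZMod (2*n)) + 1) - x (k + (i : ZMod (2*n)))) := by
  intro i hi
  induction i, hi using Nat.le_induction with
  | base =>
    intro _ k
    rw [Nat.cast_one]
    exact tpos hn x hinj hcyc k
  | succ i hi IH =>
    intro hle k
    have hii : i ≤ n - 1 := by omega
    by_contra hcon
    push_neg at hcon
    rw [Nat.cast_add, Nat.cast_one, ← add_assoc] at hcon
    have hP := IH hii k
    have hQ := tpos hn x hinj hcyc (k + (i : ZMod (2*n)))
    have hB1 := lmin' x hinj hcyc k (k + (i : ZMod (2*n)) + 1 + (n : ZMod (2*n)))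
      (fun h => cfalse (n := n) (i+1+n) 0 (by omega) (by omega) (by omega)
        (by push_cast; linear_combination h))
      (fun h => cfalse (n := n) (i+n) 0 (by omega) (by omega) (by omega)
        (by push_cast; linear_combination h))
    rw [hanti (k + (i : ZMod (2*n)) + 1)] at hB1
    have hB2 := lmax' hn x hinj hanti hcyc (k + (i : ZMod (2*n)) + 1) (k+1)
      (fun h => cfalse (n := n) n i (by omega) (by omega) (by omega)
        (by push_cast; linear_combination h))
      (fun h => cfalse (n := n) n (i+1) (by omega) (by omega) (by omega)
        (by push_cast; linear_combination h))
    have hB3 := lmax' hn x hinj hanti hcyc (k + (i : ZMod (2*n))) (k+1)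
      (fun h => cfalse (n := n) (n+1) i (by omega) (by omega) (by omega)
        (by push_cast; linear_combination h))
      (fun h => cfalse (n := n) n i (by omega) (by omega) (by omega)
        (by push_cast; linear_combination h))
    have idA : cross (x (k+1) - x k) (x (k + (i:ZMod (2*n)) + 1) - x (k + (i:ZMod (2*n))))
          * cross (x (k + (i:ZMod (2*n)) + 1 + 1) - x (k + (i:ZMod (2*n)) + 1))
              (x (k + (i:ZMod (2*n)) + 1 + 1))
        = cross (x (k+1) - x k)
              (x (k + (i:ZMod (2*n)) + 1 + 1) - x (k + (i:ZMod (2*n)) + 1))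
            * cross (x (k + (i:ZMod (2*n)) + 1) - x (k + (i:ZMod (2*n))))
              (x (k + (i:ZMod (2*n)) + 1))
          + cross (x (k + (i:ZMod (2*n)) + 1) - x (k + (i:ZMod (2*n))))
              (x (k + (i:ZMod (2*n)) + 1 + 1) - x (k + (i:ZMod (2*n)) + 1))
            * cross (x (k+1) - x k) (-x (k + (i:ZMod (2*n)) + 1)) := by
      simp only [cross, PiLp.sub_apply, PiLp.neg_apply]; ring
    have idB : cross (x (k+1) - x k) (x (k + (i:ZMod (2*n)) + 1) - x (k + (i:ZMod (2*n))))
          * cross (x (k + (i:ZMod (2*n)) + 1 + 1) - x (k + (i:ZMod (2*n)) + 1)) (x (k+1))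
        = cross (x (k+1) - x k)
              (x (k + (i:ZMod (2*n)) + 1 + 1) - x (k + (i:ZMod (2*n)) + 1))
            * cross (x (k + (i:ZMod (2*n)) + 1) - x (k + (i:ZMod (2*n)))) (x (k+1))
          - cross (x (k + (i:ZMod (2*n)) + 1) - x (k + (i:ZMod (2*n))))
              (x (k + (i:ZMod (2*n)) + 1 + 1) - x (k + (i:ZMod (2*n)) + 1))
            * cross (x (k+1) - x k) (x (k+1)) := by
      simp only [cross, PiLp.sub_apply]; ring
    have f1 := mul_lt_mul_of_pos_left hB1 hQ
    have f2 := mul_lt_mul_of_pos_left hB2 hP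
    have f3 := mul_le_mul_of_nonpos_left (le_of_lt hB3) hcon
    linarith [idA, idB, f1, f2, f3]

end Geom
-- continuation fragment (appended to geometry for testing)
section Sums
variable {n : ℕ} [NeZero (2*n)]

noncomputable def Rf (x : ZMod (2*n) → EuclideanSpace ℝ (Fin 2)) (j : ZMod (2*n)) : ℝ :=
  ∑ k : ZMod (2*n), cross (x k) (x (k + j))

noncomputable def Sf (x : ZMod (2*n) → EuclideanSpace ℝ (Fin 2)) (j : ZMod (2*n)) : ℝ :=
  ∑ k : ZMod (2*n), cross (x (k+1) - x k) (x (k+j+1) - x (k+j))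

lemma sumShift (f : ZMod (2*n) → ℝ) (c : ZMod (2*n)) :
    ∑ k : ZMod (2*n), f (k + c) = ∑ k : ZMod (2*n), f k :=
  Fintype.sum_equiv (Equiv.addRight c) _ _ (fun _ => rfl)

variable (x : ZMod (2*n) → EuclideanSpace ℝ (Fin 2))

lemma SR (j : ZMod (2*n)) : Sf x j = 2 * Rf x j - Rf x (j - 1) - Rf x (j + 1) := by
  have hexp : ∀ k : ZMod (2*n), cross (x (k+1) - x k) (x (k+j+1) - x (k+j))
      = cross (x (k+1)) (x ((k+1)+j)) - cross (x (k+1)) (x ((k+1)+(j-1)))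
        - cross (x k) (x (k+(j+1))) + cross (x k) (x (k+j)) := by
    intro k
    have e1 : (k+1)+j = k+j+1 := by ring
    have e2 : (k+1)+(j-1) = k+j := by ring
    have e3 : k+(j+1) = k+j+1 := by ring
    rw [e1, e2, e3]
    simp only [cross, PiLp.sub_apply]; ring
  unfold Sf
  rw [Finset.sum_congr rfl (fun k _ => hexp k), Finset.sum_add_distrib,
    Finset.sum_sub_distrib, Finset.sum_sub_distrib]
  rw [sumShift (fun m => cross (x m) (x (m+j))) 1,
    sumShift (fun m => cross (x m) (x (m+(j-1)))) 1]
  unfold Rf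
  ring

lemma crossself (a : EuclideanSpace ℝ (Fin 2)) : cross a a = 0 := by
  simp only [cross]; ring

lemma R0 : Rf x 0 = 0 := by
  unfold Rf
  simp [crossself]

variable (hanti : ∀ k, x (k + (n : ZMod (2 * n))) = -x k)
include hanti

lemma Rhalf : Rf x ((n : ℕ) : ZMod (2*n)) = 0 := by
  unfold Rf
  apply Finset.sum_eq_zero
  intro k _
  rw [hanti k]
  simp only [cross, PiLp.neg_apply]; ring

lemma Ssym (j : ZMod (2*n)) : Sf x ((n : ZMod (2*n)) - j) = Sf x j := by
  have hterm : ∀ k : ZMod (2*n),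
      cross (x (k+1) - x k) (x (k+((n : ZMod (2*n))-j)+1) - x (k+((n : ZMod (2*n))-j)))
      = cross (x ((k + -j)+1) - x (k + -j)) (x ((k + -j)+j+1) - x ((k + -j)+j)) := by
    intro k
    have e1 : k+((n : ZMod (2*n))-j)+1 = ((k + -j)+1) + (n : ZMod (2*n)) := by ring
    have e2 : k+((n : ZMod (2*n))-j) = (k + -j) + (n : ZMod (2*n)) := by ring
    have e3 : (k + -j)+j = k := by ring
    rw [e1, e2, hanti ((k + -j)+1), hanti (k + -j), e3]
    simp only [cross, PiLp.sub_apply, PiLp.neg_apply]; ring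
  unfold Sf
  rw [Finset.sum_congr rfl (fun k _ => hterm k)]
  exact sumShift (fun m => cross (x (m+1) - x m) (x (m+j+1) - x (m+j))) (-j)

lemma recnat (i : ℕ) :
    Rf x (((i+2 : ℕ)) : ZMod (2*n)) = 2 * Rf x ((i+1 : ℕ) : ZMod (2*n))
      - Rf x ((i : ℕ) : ZMod (2*n)) - Sf x ((i+1 : ℕ) : ZMod (2*n)) := by
  have h := SR x ((i+1 : ℕ) : ZMod (2*n))
  have e1 : ((i+1 : ℕ) : ZMod (2*n)) - 1 = ((i : ℕ) : ZMod (2*n)) := by push_cast; ring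
  have e2 : ((i+1 : ℕ) : ZMod (2*n)) + 1 = ((i+2 : ℕ) : ZMod (2*n)) := by push_cast; ring
  rw [e1, e2] at h
  linarith

lemma Dlem : ∀ i : ℕ, Rf x ((i+1 : ℕ) : ZMod (2*n)) - Rf x ((i : ℕ) : ZMod (2*n))
    = Rf x ((1 : ℕ) : ZMod (2*n)) - ∑ j ∈ Finset.range i, Sf x ((j+1 : ℕ) : ZMod (2*n)) := by
  intro i
  induction i with
  | zero => simp [R0]
  | succ i ih =>
    have h := recnat x hanti i
    rw [Finset.sum_range_succ]
    linarith

lemma Tele (m : ℕ) : Rf x ((m : ℕ) : ZMod (2*n))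
    = ∑ i ∈ Finset.range m, (Rf x ((i+1 : ℕ) : ZMod (2*n)) - Rf x ((i : ℕ) : ZMod (2*n))) := by
  rw [Finset.sum_range_sub (fun i => Rf x ((i : ℕ) : ZMod (2*n)))]
  simp [R0]

end Sums
section Key
variable {n : ℕ} [NeZero (2*n)]

lemma dsum (g : ℕ → ℝ) (m : ℕ) :
    ∑ i ∈ Finset.range m, ∑ j ∈ Finset.range i, g j
      = ∑ j ∈ Finset.range m, ((m - 1 - j : ℕ) : ℝ) * g j := by
  induction m with
  | zero => simp
  | succ m ih =>
    rw [Finset.sum_range_succ, ih, Finset.sum_range_succ]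
    simp only [Nat.add_sub_cancel, Nat.sub_self, Nat.cast_zero, zero_mul, add_zero]
    rw [← Finset.sum_add_distrib]
    apply Finset.sum_congr rfl
    intro j hj
    have hj' : j < m := Finset.mem_range.1 hj
    have e : (m - j : ℕ) = (m - 1 - j) + 1 := by omega
    rw [e, Nat.cast_add, Nat.cast_one]
    ring

lemma peelBot (f : ℕ → ℝ) (m : ℕ) (hm : 1 ≤ m) :
    ∑ j ∈ Finset.range m, f j = f 0 + ∑ j ∈ Finset.range (m-1), f (j+1) := by
  obtain ⟨m', rfl⟩ : ∃ m', m = m'+1 := ⟨m-1, by omega⟩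
  rw [Finset.sum_range_succ' f m']
  simp only [Nat.add_sub_cancel]
  exact add_comm _ _

lemma peelTop (f : ℕ → ℝ) (m : ℕ) (hm : 1 ≤ m) :
    ∑ j ∈ Finset.range m, f j = (∑ j ∈ Finset.range (m-1), f j) + f (m-1) := by
  obtain ⟨m', rfl⟩ : ∃ m', m = m'+1 := ⟨m-1, by omega⟩
  rw [Finset.sum_range_succ]
  simp only [Nat.add_sub_cancel]

variable (x : ZMod (2*n) → EuclideanSpace ℝ (Fin 2))

lemma S0 : Sf x (0 : ZMod (2*n)) = 0 := by
  unfold Sf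
  apply Finset.sum_eq_zero
  intro k _
  simp only [add_zero]
  exact crossself _

variable (hanti : ∀ k, x (k + (n : ZMod (2 * n))) = -x k)
include hanti

lemma key (hn : 3 ≤ n) :
    Rf x ((2:ℕ) : ZMod (2*n)) - Rf x ((1:ℕ) : ZMod (2*n))
      = (∑ j ∈ Finset.range (n-3), Sf x ((j+2 : ℕ) : ZMod (2*n))) / 2 := by
  classical
  set Sn : ℕ → ℝ := fun t => Sf x ((t : ℕ) : ZMod (2*n)) with hSn
  set R1 : ℝ := Rf x ((1:ℕ) : ZMod (2*n)) with hR1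
  have hS0 : Sn 0 = 0 := by rw [hSn]; simp only [Nat.cast_zero]; exact S0 x
  have hsymt : ∀ t : ℕ, t ≤ n → Sn (n - t) = Sn t := by
    intro t ht
    rw [hSn]
    simp only
    rw [Nat.cast_sub ht]
    exact Ssym x hanti (t : ZMod (2*n))
  have hSnn : Sn n = 0 := by
    have := hsymt n le_rfl
    rw [Nat.sub_self, hS0] at this
    exact this.symm
  have hTele : (0:ℝ) = (n:ℝ) * R1 - ∑ j ∈ Finset.range n, ((n-1-j:ℕ):ℝ) * Sn (j+1) := by
    have h1 := Tele x hanti n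
    rw [Rhalf x hanti] at h1
    rw [Finset.sum_congr rfl (fun i _ => Dlem x hanti i)] at h1
    rw [Finset.sum_sub_distrib, Finset.sum_const, Finset.card_range,
      dsum (fun j => Sn (j+1)) n, nsmul_eq_mul] at h1
    exact h1
  have hT1U : ∑ j ∈ Finset.range n, ((n-1-j:ℕ):ℝ) * Sn (j+1)
      = ∑ t ∈ Finset.range n, ((n-t:ℕ):ℝ) * Sn t := by
    have c1 : ∑ j ∈ Finset.range n, ((n-1-j:ℕ):ℝ) * Sn (j+1)
        = ∑ j ∈ Finset.range n, ((n-(j+1):ℕ):ℝ) * Sn (j+1) := by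
      apply Finset.sum_congr rfl
      intro j _
      congr 2
      omega
    rw [c1]
    have c2 := Finset.sum_range_succ' (fun t => ((n-t:ℕ):ℝ) * Sn t) n
    have c3 := Finset.sum_range_succ (fun t => ((n-t:ℕ):ℝ) * Sn t) n
    simp only [Nat.sub_self, Nat.cast_zero, zero_mul, add_zero, Nat.sub_zero] at c2 c3
    rw [hS0, mul_zero, add_zero] at c2
    rw [c3] at c2
    exact c2.symm
  have hU : ∑ t ∈ Finset.range n, ((n-t:ℕ):ℝ) * Sn t
      = ∑ j ∈ Finset.range n, ((j+1:ℕ):ℝ) * Sn (j+1) := by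
    rw [← Finset.sum_range_reflect (fun t => ((n-t:ℕ):ℝ) * Sn t) n]
    apply Finset.sum_congr rfl
    intro j hj
    have hj' : j < n := Finset.mem_range.1 hj
    have e1 : n - (n-1-j) = j+1 := by omega
    have e2 : n-1-j = n-(j+1) := by omega
    rw [e1, e2, hsymt (j+1) (by omega)]
  have hpair : (∑ j ∈ Finset.range n, ((n-(j+1):ℕ):ℝ) * Sn (j+1))
      + (∑ j ∈ Finset.range n, ((j+1:ℕ):ℝ) * Sn (j+1))
      = (n:ℝ) * ∑ j ∈ Finset.range n, Sn (j+1) := by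
    rw [← Finset.sum_add_distrib, Finset.mul_sum]
    apply Finset.sum_congr rfl
    intro j hj
    have hj' : j < n := Finset.mem_range.1 hj
    have e : ((n-(j+1):ℕ):ℝ) + ((j+1:ℕ):ℝ) = (n:ℝ) := by
      rw [← Nat.cast_add]
      congr 1
      omega
    rw [← add_mul, e]
  have c1' : ∑ j ∈ Finset.range n, ((n-1-j:ℕ):ℝ) * Sn (j+1)
      = ∑ j ∈ Finset.range n, ((n-(j+1):ℕ):ℝ) * Sn (j+1) := by
    apply Finset.sum_congr rfl
    intro j _
    congr 2
    omega
  have hn0 : (n:ℝ) ≠ 0 := by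
    have : 0 < n := by omega
    positivity
  have hSig : 2 * R1 = ∑ j ∈ Finset.range n, Sn (j+1) := by
    have hq : (n:ℝ) * (2 * R1) = (n:ℝ) * (∑ j ∈ Finset.range n, Sn (j+1)) := by
      linarith [hTele, hT1U, hU, hpair, c1']
    exact mul_left_cancel₀ hn0 hq
  have p1 : ∑ j ∈ Finset.range n, Sn (j+1)
      = Sn 1 + ∑ j ∈ Finset.range (n-1), Sn (j+2) :=
    peelBot (fun j => Sn (j+1)) n (by omega)
  have p2 : ∑ j ∈ Finset.range (n-1), Sn (j+2)
      = (∑ j ∈ Finset.range (n-2), Sn (j+2)) + Sn n := by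
    have h := peelTop (fun j => Sn (j+2)) (n-1) (by omega)
    rw [show n-1-1+2 = n from by omega] at h
    rw [show n-1-1 = n-2 from by omega] at h
    exact h
  have p3 : ∑ j ∈ Finset.range (n-2), Sn (j+2)
      = (∑ j ∈ Finset.range (n-3), Sn (j+2)) + Sn (n-1) := by
    have h := peelTop (fun j => Sn (j+2)) (n-2) (by omega)
    rw [show n-2-1+2 = n-1 from by omega] at h
    rw [show n-2-1 = n-3 from by omega] at h
    exact h
  have hs1 : Sn (n-1) = Sn 1 := hsymt 1 (by omega)
  have h2 := recnat x hanti 0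
  have h00 : Rf x ((0:ℕ) : ZMod (2*n)) = 0 := by
    rw [Nat.cast_zero]; exact R0 x
  rw [show ((0+2 : ℕ)) = 2 from rfl, show ((0+1 : ℕ)) = 1 from rfl, h00] at h2
  have hgoal : Rf x ((2:ℕ) : ZMod (2*n)) - R1 = R1 - Sn 1 := by
    rw [h2, hR1]
    simp only [hSn]
    ring
  rw [hgoal]
  have : (∑ j ∈ Finset.range (n-3), Sf x ((j+2 : ℕ) : ZMod (2*n)))
      = ∑ j ∈ Finset.range (n-3), Sn (j+2) := rfl
  rw [this]
  linarith [hSig, p1, p2, p3, hs1, hSnn]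
end Key

section Pos
variable {n : ℕ} [NeZero (2*n)] (hn : 3 ≤ n) (x : ZMod (2*n) → EuclideanSpace ℝ (Fin 2))
  (hinj : Function.Injective x)
  (hanti : ∀ k, x (k + (n : ZMod (2 * n))) = -x k)
  (hcyc : IsConvexCyclic x)
include hn hinj hanti hcyc

lemma Spos (j : ℕ) (h1 : 1 ≤ j) (h2 : j ≤ n-1) :
    0 < Sf x ((j : ℕ) : ZMod (2*n)) := by
  have : Nonempty (ZMod (2*n)) := ⟨0⟩
  unfold Sf
  apply Finset.sum_pos
  · intro k _
    exact claimC hn x hinj hanti hcyc j h1 h2 k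
  · exact Finset.univ_nonempty

end Pos
end S9

/-- In a centrally symmetric convex 2n-gon with n ≥ 3, the sum over edges of the areas of
the type-1 parallelograms is at most the sum over vertices of the areas of the type-2
parallelograms, with equality if and only if n = 3. -/
theorem stmt9 (n : ℕ) (hn : 3 ≤ n) [NeZero (2 * n)]
    (x : ZMod (2 * n) → EuclideanSpace ℝ (Fin 2))
    (hinj : Function.Injective x)
    (hanti : ∀ k, x (k + (n : ZMod (2 * n))) = -x k)
    (hcyc : IsConvexCyclic x) :
    (∑ k : ZMod (2 * n), area (convexHull ℝ {x (k - 1), x k, -x (k - 1), -x k})) ≤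
      (∑ k : ZMod (2 * n),
        area (convexHull ℝ {x (k - 1), x (k + 1), -x (k - 1), -x (k + 1)})) ∧
    ((∑ k : ZMod (2 * n), area (convexHull ℝ {x (k - 1), x k, -x (k - 1), -x k})) =
      (∑ k : ZMod (2 * n),
        area (convexHull ℝ {x (k - 1), x (k + 1), -x (k - 1), -x (k + 1)})) ↔ n = 3) := by
  classical
  have harea1 : ∀ k : ZMod (2*n), area (convexHull ℝ {x (k - 1), x k, -x (k - 1), -x k})
      = 2 * S9.cross (x (k-1)) (x k) := by
    intro k
    rw [S9.areaHull (x (k-1)) (x k)]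
    have hcp := S9.cpos hn x hinj hanti hcyc (k-1)
    rw [sub_add_cancel] at hcp
    rw [abs_of_pos hcp]
  have harea2 : ∀ k : ZMod (2*n),
      area (convexHull ℝ {x (k - 1), x (k + 1), -x (k - 1), -x (k + 1)})
      = 2 * S9.cross (x (k-1)) (x (k+1)) := by
    intro k
    rw [S9.areaHull (x (k-1)) (x (k+1)),
      abs_of_pos (S9.epos hn x hinj hanti hcyc k)]
  rw [Finset.sum_congr rfl (fun k _ => harea1 k), Finset.sum_congr rfl (fun k _ => harea2 k),
    ← Finset.mul_sum, ← Finset.mul_sum]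
  have hs1 : ∑ k : ZMod (2*n), S9.cross (x (k-1)) (x k)
      = S9.Rf x ((1:ℕ) : ZMod (2*n)) := by
    have h : S9.Rf x ((1:ℕ) : ZMod (2*n)) = ∑ k : ZMod (2*n), S9.cross (x k) (x (k+1)) := by
      rw [Nat.cast_one]; rfl
    rw [h]
    exact (Fintype.sum_equiv (Equiv.addRight (1 : ZMod (2*n)))
      (fun k => S9.cross (x k) (x (k+1))) (fun m => S9.cross (x (m-1)) (x m))
      (fun k => by
        show S9.cross (x k) (x (k+1)) = S9.cross (x (k+1-1)) (x (k+1))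
        rw [add_sub_cancel_right])).symm
  have hs2 : ∑ k : ZMod (2*n), S9.cross (x (k-1)) (x (k+1))
      = S9.Rf x ((2:ℕ) : ZMod (2*n)) := by
    exact (Fintype.sum_equiv (Equiv.addRight (1 : ZMod (2*n)))
      (fun k => S9.cross (x k) (x (k + ((2:ℕ) : ZMod (2*n)))))
      (fun m => S9.cross (x (m-1)) (x (m+1)))
      (fun k => by
        show S9.cross (x k) (x (k + ((2:ℕ) : ZMod (2*n))))
          = S9.cross (x (k+1-1)) (x (k+1+1))
        rw [add_sub_cancel_right, show k + ((2:ℕ) : ZMod (2*n)) = k+1+1 by push_cast; ring])).symm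
  rw [hs1, hs2]
  have hkey := S9.key x hanti hn
  have hnonneg : ∀ j ∈ Finset.range (n-3), (0:ℝ) < S9.Sf x ((j+2 : ℕ) : ZMod (2*n)) := by
    intro j hj
    have hj' : j < n - 3 := Finset.mem_range.1 hj
    exact S9.Spos hn x hinj hanti hcyc (j+2) (by omega) (by omega)
  have hC0 : (0:ℝ) ≤ ∑ j ∈ Finset.range (n-3), S9.Sf x ((j+2 : ℕ) : ZMod (2*n)) :=
    Finset.sum_nonneg (fun j hj => le_of_lt (hnonneg j hj))
  set A := S9.Rf x ((1:ℕ) : ZMod (2*n)) with hA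
  set B := S9.Rf x ((2:ℕ) : ZMod (2*n)) with hB
  set C := ∑ j ∈ Finset.range (n-3), S9.Sf x ((j+2 : ℕ) : ZMod (2*n)) with hC
  constructor
  · linarith
  · constructor
    · intro heq
      by_contra hne
      have hCpos : (0:ℝ) < C := by
        rw [hC]
        exact Finset.sum_pos hnonneg (Finset.nonempty_range_iff.mpr (by omega))
      linarith
    · intro h3
      have h30 : n - 3 = 0 := by omega
      have hCz : C = 0 := by rw [hC, h30]; simp
      linarith
end

section
/- Let A be a centrally symmetric convex polygon in R², suppose the edge s ∈ E(A) is horizontal, let s' be an edge adjacent to s, and let z be the intersection of the vertical axis with the line containing s'. Write each edge t of A as lying in the line {x : ⟨x, u(t)⟩ = c(t)} with u(t) a unit normal and c(t) > 0, and let v°(t) = u(t)/c(t) be the corresponding vertex of the polar polygon A°. Let α be the vertical distance from z to the line containing s, β the vertical distance from v°(s) to v°(s'), and γ the vertical distance from v°(s') to the origin. Then α/c(s) = β/γ. -/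
open MeasureTheory Set

/-- Lemma 3.1 of the paper: with s = edge k horizontal, s' = edge k+1 adjacent to it,
z = (0, z₂) the intersection of the vertical axis with the line of s', α the vertical
distance from z to the line of s, β the vertical distance from v°(s) to v°(s'), and γ the
vertical distance from v°(s') to the origin, we have α / c(s) = β / γ.  Here edge j of the
polygon lies in the line {p : ⟪u j, p⟫ = c j} with unit outer normal u j and c j > 0, and
v°(j) = (c j)⁻¹ • u j is the corresponding vertex of the polar polygon. -/
theorem stmt10 (n : ℕ) (hn : 2 ≤ n)
    (x u : ZMod (2 * n) → EuclideanSpace ℝ (Fin 2)) (c : ZMod (2 * n) → ℝ)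
    (hinj : Function.Injective x)
    (hanti : ∀ k, x (k + (n : ZMod (2 * n))) = -x k)
    (hcyc : IsConvexCyclic x)
    (hu : ∀ j, ‖u j‖ = 1) (hc : ∀ j, 0 < c j)
    (hedge : ∀ j, inner ℝ (u j) (x (j - 1)) = c j ∧ inner ℝ (u j) (x j) = c j)
    (k : ZMod (2 * n))
    (hhor : u k 0 = 0)
    (z₂ : ℝ) (hz : u (k + 1) 1 * z₂ = c (k + 1))
    (α β γ : ℝ)
    (hα : α = |z₂ - c k / u k 1|)
    (hβ : β = |u k 1 / c k - u (k + 1) 1 / c (k + 1)|)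
    (hγ : γ = |u (k + 1) 1 / c (k + 1)|) :
    α / c k = β / γ := by
  have hck := hc k
  have hc1 := hc (k + 1)
  have hb0 : u (k + 1) 1 ≠ 0 := by
    intro h; rw [h, zero_mul] at hz; exact hc1.ne' hz.symm
  have hz2 : z₂ = c (k + 1) / u (k + 1) 1 := by field_simp; linarith [hz]
  have h2 : u k 1 = 1 ∨ u k 1 = -1 := by
    have h := hu k
    rw [EuclideanSpace.norm_eq] at h
    have h2 : Real.sqrt (∑ i : Fin 2, ‖u k i‖ ^ 2) ^ 2 = 1 ^ 2 := by rw [h]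
    rw [Real.sq_sqrt (by positivity)] at h2
    simpa [Fin.sum_univ_two, hhor, Real.norm_eq_abs, sq_abs] using h2
  have ha0 : u k 1 ≠ 0 := by rcases h2 with h | h <;> rw [h] <;> norm_num
  have hγpos : 0 < |u (k + 1) 1 / c (k + 1)| := by positivity
  rw [hα, hβ, hγ, hz2, div_eq_div_iff hck.ne' hγpos.ne']
  have keyeq : (c (k + 1) / u (k + 1) 1 - c k / u k 1) * (u (k + 1) 1 / c (k + 1))
      = u k 1 * ((u k 1 / c k - u (k + 1) 1 / c (k + 1)) * c k) := by
    rcases h2 with h | h <;> rw [h] <;> field_simp <;> ring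
  calc |c (k + 1) / u (k + 1) 1 - c k / u k 1| * |u (k + 1) 1 / c (k + 1)|
      = |(c (k + 1) / u (k + 1) 1 - c k / u k 1) * (u (k + 1) 1 / c (k + 1))| := by
        rw [abs_mul]
    _ = |u k 1| * |(u k 1 / c k - u (k + 1) 1 / c (k + 1)) * c k| := by
        rw [keyeq, abs_mul]
    _ = |u k 1 / c k - u (k + 1) 1 / c (k + 1)| * c k := by
        have : |u k 1| = 1 := by rcases h2 with h | h <;> rw [h] <;> norm_num
        rw [this, one_mul, abs_mul, abs_of_pos hck]
end

section
/- Let A be a centrally symmetric convex polygon in R² and let s be a horizontal edge of A such that the two lines containing the edges adjacent to s intersect on the vertical axis. Then the two vertices of the polar polygon A° adjacent to v°(s) have equal second coordinates (they lie on a common horizontal line). -/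
open MeasureTheory Set

/-- If s = edge k of a centrally symmetric convex polygon is horizontal and the lines
containing the two adjacent edges meet on the vertical axis, then the two vertices of the
polar polygon adjacent to v°(s), namely v°(k-1) = (c (k-1))⁻¹ • u (k-1) and
v°(k+1) = (c (k+1))⁻¹ • u (k+1), have equal second coordinates. -/
theorem stmt11 (n : ℕ) (hn : 2 ≤ n)
    (x u : ZMod (2 * n) → EuclideanSpace ℝ (Fin 2)) (c : ZMod (2 * n) → ℝ)
    (hinj : Function.Injective x)
    (hanti : ∀ k, x (k + (n : ZMod (2 * n))) = -x k)
    (hcyc : IsConvexCyclic x)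
    (hu : ∀ j, ‖u j‖ = 1) (hc : ∀ j, 0 < c j)
    (hedge : ∀ j, inner ℝ (u j) (x (j - 1)) = c j ∧ inner ℝ (u j) (x j) = c j)
    (k : ZMod (2 * n))
    (hhor : u k 0 = 0)
    (z : EuclideanSpace ℝ (Fin 2)) (hz0 : z 0 = 0)
    (hz1 : inner ℝ (u (k - 1)) z = c (k - 1)) (hz2 : inner ℝ (u (k + 1)) z = c (k + 1)) :
    ((c (k - 1))⁻¹ • u (k - 1)) 1 = ((c (k + 1))⁻¹ • u (k + 1)) 1 := by
  have h1 : u (k - 1) 1 * z 1 = c (k - 1) := by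
    simpa [PiLp.inner_apply, RCLike.inner_apply, Fin.sum_univ_two, hz0, mul_comm] using hz1
  have h2 : u (k + 1) 1 * z 1 = c (k + 1) := by
    simpa [PiLp.inner_apply, RCLike.inner_apply, Fin.sum_univ_two, hz0, mul_comm] using hz2
  have hz : z 1 ≠ 0 := by
    intro h
    exact (hc (k - 1)).ne' (by rw [← h1, h, mul_zero])
  have hu1 : u (k - 1) 1 ≠ 0 := by
    intro h; exact (hc (k - 1)).ne' (by rw [← h1, h, zero_mul])
  have hu2 : u (k + 1) 1 ≠ 0 := by
    intro h; exact (hc (k + 1)).ne' (by rw [← h2, h, zero_mul])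
  have e1 : (c (k - 1))⁻¹ * u (k - 1) 1 = (z 1)⁻¹ := by
    rw [← h1]; field_simp
  have e2 : (c (k + 1))⁻¹ * u (k + 1) 1 = (z 1)⁻¹ := by
    rw [← h2]; field_simp
  simpa [PiLp.smul_apply, smul_eq_mul] using e1.trans e2.symm
end

section
/- For every centrally symmetric convex body A in R², the Mahler volume satisfies M(A) ≥ 8 = M([-1,1]²), i.e., the two-dimensional Mahler conjecture holds. -/
open MeasureTheory Set

local notation "E2" => EuclideanSpace ℝ (Fin 2)

lemma inner2 (x y : E2) : (inner ℝ x y : ℝ) = x 0 * y 0 + x 1 * y 1 := by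
  simp [PiLp.inner_apply, Fin.sum_univ_two, mul_comm]

noncomputable def mkL (p q r s : ℝ) : E2 →ₗ[ℝ] E2 where
  toFun x := WithLp.toLp 2 ![p * x 0 + q * x 1, r * x 0 + s * x 1]
  map_add' x y := by
    ext i
    fin_cases i <;> simp [PiLp.add_apply] <;> ring
  map_smul' c x := by
    ext i
    fin_cases i <;> simp [PiLp.smul_apply, smul_eq_mul] <;> ring

lemma mkL_apply (p q r s : ℝ) (x : E2) :
    mkL p q r s x = WithLp.toLp 2 ![p * x 0 + q * x 1, r * x 0 + s * x 1] := rfl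

lemma det_mkL (p q r s : ℝ) : LinearMap.det (mkL p q r s) = p * s - q * r := by
  rw [← LinearMap.det_toMatrix (PiLp.basisFun 2 ℝ (Fin 2))]
  rw [Matrix.det_fin_two]
  simp [LinearMap.toMatrix_apply, mkL_apply, PiLp.basisFun_apply]

noncomputable def phi2 : E2 ≃ᵐ ℝ × ℝ :=
  (MeasurableEquiv.toLp 2 (Fin 2 → ℝ)).symm.trans MeasurableEquiv.finTwoArrow

lemma phi2_mp : MeasurePreserving phi2 volume volume :=
  (volume_preserving_finTwoArrow ℝ).comp (EuclideanSpace.volume_preserving_symm_measurableEquiv_toLp (Fin 2))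

lemma vol_via_phi2 (S : Set E2) : volume S = volume (phi2 '' S) := by
  rw [← phi2_mp.measure_preimage_equiv (phi2 '' S)]
  congr 1
  exact (MeasurableEquiv.preimage_image phi2 S).symm

lemma vol_tri_prod :
    volume {p : ℝ × ℝ | 0 ≤ p.1 ∧ 0 ≤ p.2 ∧ p.1 + p.2 ≤ 1} = ENNReal.ofReal (1/2) := by
  have hmeas : MeasurableSet {p : ℝ × ℝ | 0 ≤ p.1 ∧ 0 ≤ p.2 ∧ p.1 + p.2 ≤ 1} := by
    apply MeasurableSet.inter
    · exact measurableSet_le measurable_const measurable_fst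
    apply MeasurableSet.inter
    · exact measurableSet_le measurable_const measurable_snd
    · exact measurableSet_le (measurable_fst.add measurable_snd) measurable_const
  rw [Measure.volume_eq_prod, Measure.prod_apply hmeas]
  have hslice : ∀ x : ℝ, volume (Prod.mk x ⁻¹' {p : ℝ × ℝ | 0 ≤ p.1 ∧ 0 ≤ p.2 ∧ p.1 + p.2 ≤ 1})
      = (Icc (0:ℝ) 1).indicator (fun x => ENNReal.ofReal (1 - x)) x := by
    intro x
    by_cases hx : x ∈ Icc (0:ℝ) 1
    · rw [indicator_of_mem hx]
      have : Prod.mk x ⁻¹' {p : ℝ × ℝ | 0 ≤ p.1 ∧ 0 ≤ p.2 ∧ p.1 + p.2 ≤ 1} = Icc 0 (1 - x) := by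
        ext y; simp only [mem_preimage, mem_setOf_eq, mem_Icc]
        constructor
        · rintro ⟨h1, h2, h3⟩; exact ⟨h2, by linarith⟩
        · rintro ⟨h1, h2⟩; exact ⟨hx.1, h1, by linarith⟩
      rw [this, Real.volume_Icc]; ring_nf
    · rw [indicator_of_notMem hx]
      have : Prod.mk x ⁻¹' {p : ℝ × ℝ | 0 ≤ p.1 ∧ 0 ≤ p.2 ∧ p.1 + p.2 ≤ 1} = ∅ := by
        ext y; simp only [mem_preimage, mem_setOf_eq, mem_empty_iff_false, iff_false]
        rintro ⟨h1, h2, h3⟩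
        simp only [mem_Icc, not_and_or, not_le] at hx
        rcases hx with h | h
        · linarith
        · linarith
      rw [this]; simp
  simp_rw [hslice]
  rw [lintegral_indicator measurableSet_Icc]
  rw [← ofReal_integral_eq_lintegral_ofReal]
  · rw [setIntegral_congr_set Ioc_ae_eq_Icc.symm]
    rw [← intervalIntegral.integral_of_le (by norm_num : (0:ℝ) ≤ 1)]
    have h12 : (∫ x in (0:ℝ)..1, (1 - x)) = 1/2 := by
      rw [intervalIntegral.integral_sub intervalIntegrable_const intervalIntegral.intervalIntegrable_id]
      simp [integral_id]
      norm_num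
    rw [h12]
  · apply IntegrableOn.integrable
    apply Integrable.sub (integrableOn_const (μ := volume) (s := Icc (0:ℝ) 1) (C := (1:ℝ)) (by simp [Real.volume_Icc]))
    exact (intervalIntegrable_iff_integrableOn_Icc_of_le (by norm_num : (0:ℝ) ≤ 1)).1
      intervalIntegral.intervalIntegrable_id
  · filter_upwards [ae_restrict_mem measurableSet_Icc] with x hx
    simp only [mem_Icc] at hx
    show (0:ℝ) ≤ 1 - x
    linarith

def T0 : Set E2 := {x : E2 | 0 ≤ x 0 ∧ 0 ≤ x 1 ∧ x 0 + x 1 ≤ 1}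

lemma vol_T0 : volume T0 = ENNReal.ofReal (1/2) := by
  rw [vol_via_phi2, MeasurableEquiv.image_eq_preimage_symm]
  have : (phi2.symm : ℝ × ℝ → E2) ⁻¹' T0 = {p : ℝ × ℝ | 0 ≤ p.1 ∧ 0 ≤ p.2 ∧ p.1 + p.2 ≤ 1} := rfl
  rw [this, vol_tri_prod]

noncomputable def tri (a b : E2) : Set E2 := mkL (a 0) (b 0) (a 1) (b 1) '' T0

lemma tri_eq (a b : E2) : tri a b = {x : E2 | ∃ s t : ℝ, 0 ≤ s ∧ 0 ≤ t ∧ s + t ≤ 1 ∧ x = s • a + t • b} := by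
  ext x
  constructor
  · rintro ⟨y, ⟨hy0, hy1, hy2⟩, rfl⟩
    refine ⟨y 0, y 1, hy0, hy1, hy2, ?_⟩
    ext i
    fin_cases i <;>
      simp [mkL_apply, PiLp.add_apply, PiLp.smul_apply, smul_eq_mul] <;> ring
  · rintro ⟨s, t, hs, ht, hst, rfl⟩
    refine ⟨!₂[s, t], ⟨by simpa using hs, by simpa using ht, by simpa using hst⟩, ?_⟩
    ext i
    fin_cases i <;>
      simp [mkL_apply, PiLp.add_apply, PiLp.smul_apply, smul_eq_mul] <;> ring

lemma vol_tri (a b : E2) :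
    volume (tri a b) = ENNReal.ofReal (|a 0 * b 1 - a 1 * b 0| / 2) := by
  rw [tri, Measure.addHaar_image_linearMap, det_mkL, vol_T0,
    ← ENNReal.ofReal_mul (abs_nonneg _)]
  ring_nf

lemma T0_compact : IsCompact T0 := by
  have hclosed : IsClosed T0 := by
    have h0 : Continuous fun x : E2 => x 0 := (EuclideanSpace.proj (0 : Fin 2)).continuous
    have h1 : Continuous fun x : E2 => x 1 := (EuclideanSpace.proj (1 : Fin 2)).continuous
    exact (isClosed_le continuous_const h0).inter
      ((isClosed_le continuous_const h1).inter (isClosed_le (h0.add h1) continuous_const))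
  apply Metric.isCompact_of_isClosed_isBounded hclosed
  apply (Metric.isBounded_iff_subset_closedBall (0 : E2)).2
  refine ⟨2, fun x hx => ?_⟩
  obtain ⟨h0, h1, h2⟩ := hx
  simp only [Metric.mem_closedBall, dist_zero_right]
  rw [EuclideanSpace.norm_eq]
  have : ∀ i : Fin 2, |x i| ≤ 1 := by
    intro i
    fin_cases i <;> simp [abs_le] <;> constructor <;> linarith
  calc Real.sqrt (∑ i, ‖x i‖ ^ 2) ≤ Real.sqrt (∑ i : Fin 2, 1) := by
        apply Real.sqrt_le_sqrt
        apply Finset.sum_le_sum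
        intro i _
        have := this i
        rw [Real.norm_eq_abs]
        nlinarith [abs_nonneg (x i)]
    _ ≤ 2 := by
        rw [Fin.sum_univ_two]
        have e2 : (1:ℝ) + 1 = 2 := by norm_num
        rw [e2]
        have h4 : Real.sqrt 2 ≤ Real.sqrt 4 := Real.sqrt_le_sqrt (by norm_num)
        have h42 : Real.sqrt 4 = 2 := by
          rw [show (4:ℝ) = 2^2 by norm_num, Real.sqrt_sq (by norm_num : (0:ℝ) ≤ 2)]
        linarith

lemma tri_compact (a b : E2) : IsCompact (tri a b) :=
  T0_compact.image (LinearMap.continuous_of_finiteDimensional _)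

lemma combo_mem {C : Set E2} (hC : Convex ℝ C) (h0 : (0:E2) ∈ C) {a b : E2}
    (ha : a ∈ C) (hb : b ∈ C) {s t : ℝ} (hs : 0 ≤ s) (ht : 0 ≤ t) (hst : s + t ≤ 1) :
    s • a + t • b ∈ C := by
  rcases eq_or_lt_of_le (add_nonneg hs ht) with h | h
  · have hs0 : s = 0 := by linarith
    have ht0 : t = 0 := by linarith
    simpa [hs0, ht0] using h0
  · have hp : (s/(s+t)) • a + (t/(s+t)) • b ∈ C :=
      hC ha hb (div_nonneg hs h.le) (div_nonneg ht h.le) (by field_simp)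
    have := hC hp h0 (le_of_lt h) (by linarith : (0:ℝ) ≤ 1 - (s+t)) (by ring)
    simpa [smul_add, smul_smul, mul_div_cancel₀, ne_of_gt h, smul_smul,
      div_mul_cancel₀] using this

-- coordinates of vector literals and sums
lemma coord_smul_add (s t : ℝ) (a b : E2) (i : Fin 2) :
    (s • a + t • b) i = s * a i + t * b i := rfl

def e1 : E2 := !₂[1, 0]
def e2 : E2 := !₂[0, 1]

lemma e1_0 : e1 0 = 1 := rfl
lemma e1_1 : e1 1 = 0 := rfl
lemma e2_0 : e2 0 = 0 := rfl
lemma e2_1 : e2 1 = 1 := rfl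

lemma cone_lemma {C : Set E2} (hC : Convex ℝ C) (h0 : (0:E2) ∈ C)
    (h1 : e1 ∈ C) (h2 : e2 ∈ C) {z : E2} (hz : z ∈ C)
    (hz0 : 0 ≤ z 0) (hz1 : 0 ≤ z 1) :
    ENNReal.ofReal ((z 0 + z 1)/2) ≤ volume (C ∩ {x : E2 | 0 ≤ x 0 ∧ 0 ≤ x 1}) := by
  by_cases hzz : z 0 = 0 ∧ z 1 = 0
  · simp [hzz.1, hzz.2]
  -- triangles
  set T1 := tri e1 z with hT1
  set T2 := tri z e2 with hT2
  have hT1sub : T1 ⊆ C ∩ {x : E2 | 0 ≤ x 0 ∧ 0 ≤ x 1} := by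
    rw [hT1, tri_eq]
    rintro x ⟨s, t, hs, ht, hst, rfl⟩
    refine ⟨combo_mem hC h0 h1 hz hs ht hst, ?_, ?_⟩ <;>
      · rw [coord_smul_add]
        first
          | (rw [e1_0]; nlinarith)
          | (rw [e1_1]; nlinarith)
  have hT2sub : T2 ⊆ C ∩ {x : E2 | 0 ≤ x 0 ∧ 0 ≤ x 1} := by
    rw [hT2, tri_eq]
    rintro x ⟨s, t, hs, ht, hst, rfl⟩
    refine ⟨combo_mem hC h0 hz h2 hs ht hst, ?_, ?_⟩ <;>
      · rw [coord_smul_add]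
        first
          | (rw [e2_0]; nlinarith)
          | (rw [e2_1]; nlinarith)
  -- a.e. disjoint
  have hker : volume {x : E2 | x 0 * z 1 - x 1 * z 0 = 0} = 0 := by
    have hset : {x : E2 | x 0 * z 1 - x 1 * z 0 = 0} =
        (LinearMap.ker (mkL (z 1) (-(z 0)) 0 0) : Set E2) := by
      ext x
      simp only [mem_setOf_eq, SetLike.mem_coe, LinearMap.mem_ker]
      constructor
      · intro h
        ext i
        fin_cases i <;> simp [mkL_apply] <;> linarith
      · intro h
        have := congrArg (fun v : E2 => v 0) h
        simp [mkL_apply] at this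
        linarith
    rw [hset]
    apply Measure.addHaar_submodule
    intro htop
    rcases not_and_or.1 hzz with h | h
    · have : e2 ∈ (LinearMap.ker (mkL (z 1) (-(z 0)) 0 0)) := htop ▸ Submodule.mem_top
      rw [LinearMap.mem_ker] at this
      have := congrArg (fun v : E2 => v 0) this
      simp [mkL_apply, e2_0, e2_1] at this
      exact h (by linarith)
    · have : e1 ∈ (LinearMap.ker (mkL (z 1) (-(z 0)) 0 0)) := htop ▸ Submodule.mem_top
      rw [LinearMap.mem_ker] at this
      have := congrArg (fun v : E2 => v 0) this
      simp [mkL_apply, e1_0, e1_1] at this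
      exact h (by linarith)
  have hdisj : volume (T1 ∩ T2) = 0 := by
    apply measure_mono_null _ hker
    rintro x ⟨hx1, hx2⟩
    rw [hT1, tri_eq] at hx1
    rw [hT2, tri_eq] at hx2
    obtain ⟨s, t, hs, ht, hst, hxe⟩ := hx1
    obtain ⟨s', t', hs', ht', hst', hxe'⟩ := hx2
    have c10 : x 0 = s * 1 + t * z 0 := by rw [hxe]; rw [coord_smul_add, e1_0]
    have c11 : x 1 = s * 0 + t * z 1 := by rw [hxe]; rw [coord_smul_add, e1_1]
    have c20 : x 0 = s' * z 0 + t' * 0 := by rw [hxe']; rw [coord_smul_add, e2_0]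
    have c21 : x 1 = s' * z 1 + t' * 1 := by rw [hxe']; rw [coord_smul_add, e2_1]
    have key1 : x 0 * z 1 - x 1 * z 0 = s * z 1 := by rw [c10, c11]; ring
    have key2 : x 0 * z 1 - x 1 * z 0 = -(t' * z 0) := by rw [c20, c21]; ring
    show x 0 * z 1 - x 1 * z 0 = 0
    nlinarith [mul_nonneg hs hz1, mul_nonneg ht' hz0]
  have hunion : volume (T1 ∪ T2) = volume T1 + volume T2 :=
    measure_union₀ ((tri_compact _ _).isClosed.measurableSet.nullMeasurableSet) hdisj
  have hv1 : volume T1 = ENNReal.ofReal (z 1 / 2) := by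
    rw [hT1, vol_tri, e1_0, e1_1]
    congr 1
    rw [abs_of_nonneg (by linarith)]
    ring
  have hv2 : volume T2 = ENNReal.ofReal (z 0 / 2) := by
    rw [hT2, vol_tri, e2_0, e2_1]
    congr 1
    rw [abs_of_nonneg (by linarith)]
    ring
  calc ENNReal.ofReal ((z 0 + z 1)/2)
      = ENNReal.ofReal (z 1 / 2) + ENNReal.ofReal (z 0 / 2) := by
        rw [← ENNReal.ofReal_add (by linarith) (by linarith)]
        ring_nf
    _ = volume (T1 ∪ T2) := by rw [hunion, hv1, hv2]
    _ ≤ volume (C ∩ {x : E2 | 0 ≤ x 0 ∧ 0 ≤ x 1}) :=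
        measure_mono (union_subset hT1sub hT2sub)

def Qpp : Set E2 := {x : E2 | 0 ≤ x 0 ∧ 0 ≤ x 1}
def Qnp : Set E2 := {x : E2 | x 0 ≤ 0 ∧ 0 ≤ x 1}
def Qnn : Set E2 := {x : E2 | x 0 ≤ 0 ∧ x 1 ≤ 0}
def Qpn : Set E2 := {x : E2 | 0 ≤ x 0 ∧ x 1 ≤ 0}

lemma cont0 : Continuous fun x : E2 => x 0 := (EuclideanSpace.proj (0 : Fin 2)).continuous
lemma cont1 : Continuous fun x : E2 => x 1 := (EuclideanSpace.proj (1 : Fin 2)).continuous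

lemma Qpp_meas : MeasurableSet Qpp :=
  ((isClosed_le continuous_const cont0).inter (isClosed_le continuous_const cont1)).measurableSet
lemma Qnp_meas : MeasurableSet Qnp :=
  ((isClosed_le cont0 continuous_const).inter (isClosed_le continuous_const cont1)).measurableSet
lemma Qnn_meas : MeasurableSet Qnn :=
  ((isClosed_le cont0 continuous_const).inter (isClosed_le cont1 continuous_const)).measurableSet
lemma Qpn_meas : MeasurableSet Qpn :=
  ((isClosed_le continuous_const cont0).inter (isClosed_le cont1 continuous_const)).measurableSet

lemma vol_line0 : volume {x : E2 | x 0 = 0} = 0 := by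
  have hset : {x : E2 | x 0 = 0} = (LinearMap.ker (mkL 1 0 0 0) : Set E2) := by
    ext x
    simp only [mem_setOf_eq, SetLike.mem_coe, LinearMap.mem_ker]
    constructor
    · intro h; ext i; fin_cases i <;> simp [mkL_apply] <;> linarith
    · intro h; have := congrArg (fun v : E2 => v 0) h; simpa [mkL_apply] using this
  rw [hset]
  apply Measure.addHaar_submodule
  intro htop
  have : e1 ∈ LinearMap.ker (mkL 1 0 0 0) := htop ▸ Submodule.mem_top
  rw [LinearMap.mem_ker] at this
  have h2 := congrArg (fun v : E2 => v 0) this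
  simp [mkL_apply, e1] at h2

lemma vol_line1 : volume {x : E2 | x 1 = 0} = 0 := by
  have hset : {x : E2 | x 1 = 0} = (LinearMap.ker (mkL 0 1 0 0) : Set E2) := by
    ext x
    simp only [mem_setOf_eq, SetLike.mem_coe, LinearMap.mem_ker]
    constructor
    · intro h; ext i; fin_cases i <;> simp [mkL_apply] <;> linarith
    · intro h; have := congrArg (fun v : E2 => v 0) h; simpa [mkL_apply] using this
  rw [hset]
  apply Measure.addHaar_submodule
  intro htop
  have : e2 ∈ LinearMap.ker (mkL 0 1 0 0) := htop ▸ Submodule.mem_top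
  rw [LinearMap.mem_ker] at this
  have h2 := congrArg (fun v : E2 => v 0) this
  simp [mkL_apply, e2] at h2

lemma neg_image (X : Set E2) : volume ((fun x : E2 => -x) '' X) = volume X := by
  have : (fun x : E2 => -x) '' X = mkL (-1) 0 0 (-1) '' X := by
    apply image_congr
    intro x _
    ext i
    fin_cases i <;> simp [mkL_apply] <;> ring
  rw [this, Measure.addHaar_image_linearMap, det_mkL]
  norm_num

lemma quad_decomp {X : Set E2} (hX : MeasurableSet X) (hsymm : ∀ x ∈ X, -x ∈ X) :
    volume (X ∩ Qpp) + volume (X ∩ Qnp) + (volume (X ∩ Qpp) + volume (X ∩ Qnp))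
      ≤ volume X := by
  have h3 : volume (X ∩ Qnn) = volume (X ∩ Qpp) := by
    rw [← neg_image (X ∩ Qpp)]
    congr 1
    ext x
    constructor
    · rintro ⟨hx, hq⟩
      exact ⟨-x, ⟨hsymm x hx, by simpa [Qpp] using hq.1, by simpa [Qpp] using hq.2⟩, by simp⟩
    · rintro ⟨y, ⟨hy, hq0, hq1⟩, rfl⟩
      refine ⟨hsymm y hy, ?_, ?_⟩ <;> simp [Qnn] at * <;> assumption
  have h4 : volume (X ∩ Qpn) = volume (X ∩ Qnp) := by
    rw [← neg_image (X ∩ Qnp)]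
    congr 1
    ext x
    constructor
    · rintro ⟨hx, hq⟩
      exact ⟨-x, ⟨hsymm x hx, by simpa [Qnp] using hq.1, by simpa [Qnp] using hq.2⟩, by simp⟩
    · rintro ⟨y, ⟨hy, hq0, hq1⟩, rfl⟩
      refine ⟨hsymm y hy, ?_, ?_⟩ <;> simp [Qpn] at * <;> assumption
  have hsub : (X ∩ Qpp) ∪ (X ∩ Qnp) ∪ ((X ∩ Qnn) ∪ (X ∩ Qpn)) ⊆ X := by
    intro x hx
    rcases hx with (h | h) | (h | h) <;> exact h.1
  have line0 : volume {x : E2 | x 0 = 0} = 0 := vol_line0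
  have line1 : volume {x : E2 | x 1 = 0} = 0 := vol_line1
  have hm12 : volume ((X ∩ Qpp) ∪ (X ∩ Qnp)) = volume (X ∩ Qpp) + volume (X ∩ Qnp) := by
    apply measure_union₀ ((hX.inter Qnp_meas).nullMeasurableSet)
    apply measure_mono_null _ line0
    rintro x ⟨⟨_, h1⟩, ⟨_, h2⟩⟩
    exact le_antisymm h2.1 h1.1
  have hm34 : volume ((X ∩ Qnn) ∪ (X ∩ Qpn)) = volume (X ∩ Qnn) + volume (X ∩ Qpn) := by
    apply measure_union₀ ((hX.inter Qpn_meas).nullMeasurableSet)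
    apply measure_mono_null _ line0
    rintro x ⟨⟨_, h1⟩, ⟨_, h2⟩⟩
    exact le_antisymm h1.1 h2.1
  have hmall : volume ((X ∩ Qpp) ∪ (X ∩ Qnp) ∪ ((X ∩ Qnn) ∪ (X ∩ Qpn)))
      = volume ((X ∩ Qpp) ∪ (X ∩ Qnp)) + volume ((X ∩ Qnn) ∪ (X ∩ Qpn)) := by
    apply measure_union₀ (((hX.inter Qnn_meas).union (hX.inter Qpn_meas)).nullMeasurableSet)
    apply measure_mono_null _ line1
    rintro x ⟨h12, h34⟩
    have hx1 : 0 ≤ x 1 := by rcases h12 with h | h; exacts [h.2.2, h.2.2]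
    have hx1' : x 1 ≤ 0 := by rcases h34 with h | h; exacts [h.2.2, h.2.2]
    exact le_antisymm hx1' hx1
  calc volume (X ∩ Qpp) + volume (X ∩ Qnp) + (volume (X ∩ Qpp) + volume (X ∩ Qnp))
      = volume ((X ∩ Qpp) ∪ (X ∩ Qnp) ∪ ((X ∩ Qnn) ∪ (X ∩ Qpn))) := by
        rw [hmall, hm12, hm34, h3, h4]
    _ ≤ volume X := measure_mono hsub

-- rotation J : x ↦ (x 1, -x 0), maps Qnp to Qpp
noncomputable def rotJ : E2 →ₗ[ℝ] E2 := mkL 0 1 (-1) 0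

lemma cone_lemma_Q2 {C : Set E2} (hC : Convex ℝ C) (h0 : (0:E2) ∈ C)
    (h2 : e2 ∈ C) (hne1 : -e1 ∈ C) {z : E2} (hz : z ∈ C)
    (hz0 : z 0 ≤ 0) (hz1 : 0 ≤ z 1) :
    ENNReal.ofReal ((z 1 - z 0)/2) ≤ volume (C ∩ Qnp) := by
  have hCc : Convex ℝ (rotJ '' C) := hC.linear_image rotJ
  have h0' : (0:E2) ∈ rotJ '' C := ⟨0, h0, map_zero _⟩
  have he1' : e1 ∈ rotJ '' C := by
    refine ⟨e2, h2, ?_⟩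
    ext i
    fin_cases i <;> simp [rotJ, mkL_apply, e1, e2]
  have he2' : e2 ∈ rotJ '' C := by
    refine ⟨-e1, hne1, ?_⟩
    ext i
    fin_cases i <;> simp [rotJ, mkL_apply, e1, e2]
  have hz' : rotJ z ∈ rotJ '' C := ⟨z, hz, rfl⟩
  have hz'0 : 0 ≤ (rotJ z) 0 := by simpa [rotJ, mkL_apply] using hz1
  have hz'1 : 0 ≤ (rotJ z) 1 := by simp [rotJ, mkL_apply]; linarith
  have hcone := cone_lemma hCc h0' he1' he2' hz' hz'0 hz'1
  have hval : ((rotJ z) 0 + (rotJ z) 1) / 2 = (z 1 - z 0)/2 := by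
    simp [rotJ, mkL_apply]
    ring
  rw [hval] at hcone
  have himg : (rotJ '' C) ∩ {x : E2 | 0 ≤ x 0 ∧ 0 ≤ x 1} = rotJ '' (C ∩ Qnp) := by
    ext x
    constructor
    · rintro ⟨⟨c, hc, rfl⟩, hq0, hq1⟩
      refine ⟨c, ⟨hc, ?_, ?_⟩, rfl⟩
      · simp only [rotJ, mkL_apply] at hq1
        simp only [Qnp, mem_setOf_eq] at *
        simp at hq1
        linarith
      · simpa [rotJ, mkL_apply] using hq0
    · rintro ⟨c, ⟨hc, hq0, hq1⟩, rfl⟩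
      refine ⟨⟨c, hc, rfl⟩, ?_, ?_⟩
      · simpa [rotJ, mkL_apply] using hq1
      · simp [rotJ, mkL_apply]; linarith [hq0]
  rw [himg] at hcone
  calc ENNReal.ofReal ((z 1 - z 0)/2) ≤ volume (rotJ '' (C ∩ Qnp)) := hcone
    _ = volume (C ∩ Qnp) := by
        rw [Measure.addHaar_image_linearMap, rotJ, det_mkL]
        norm_num

theorem core_ineq {B : Set E2} (hconv : Convex ℝ B) (hcomp : IsCompact B)
    (h0 : (0:E2) ∈ B) (he1 : e1 ∈ B) (he2 : e2 ∈ B)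
    (hsymm : ∀ a ∈ B, -a ∈ B)
    (hdet : ∀ a ∈ B, ∀ b ∈ B, |a 0 * b 1 - a 1 * b 0| ≤ 1) :
    8 ≤ volume B * volume {x : E2 | ∀ a ∈ B, (inner ℝ x a : ℝ) ≤ 1} := by
  set P : Set E2 := {x : E2 | ∀ a ∈ B, (inner ℝ x a : ℝ) ≤ 1} with hPdef
  -- B inside the square
  have hsq : ∀ a ∈ B, |a 0| ≤ 1 ∧ |a 1| ≤ 1 := by
    intro a ha
    constructor
    · have := hdet a ha e2 he2
      rw [show e2 1 = 1 from rfl, show e2 0 = 0 from rfl] at this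
      simpa using this
    · have := hdet a ha e1 he1
      rw [show e1 1 = 0 from rfl, show e1 0 = 1 from rfl] at this
      rw [show a 0 * 0 - a 1 * 1 = -(a 1) by ring] at this
      simpa using this
  set S1 := volume (B ∩ Qpp) with hS1def
  set S2 := volume (B ∩ Qnp) with hS2def
  have hS1top : S1 ≠ ⊤ :=
    (lt_of_le_of_lt (measure_mono inter_subset_left) hcomp.measure_lt_top).ne
  have hS2top : S2 ≠ ⊤ :=
    (lt_of_le_of_lt (measure_mono inter_subset_left) hcomp.measure_lt_top).ne
  set s1 := S1.toReal with hs1def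
  set s2 := S2.toReal with hs2def
  have hcone1 : ∀ a ∈ B, 0 ≤ a 0 → 0 ≤ a 1 → (a 0 + a 1)/2 ≤ s1 := by
    intro a ha ha0 ha1
    have := cone_lemma hconv h0 he1 he2 ha ha0 ha1
    exact (ENNReal.ofReal_le_iff_le_toReal hS1top).1 this
  have hcone2 : ∀ a ∈ B, a 0 ≤ 0 → 0 ≤ a 1 → (a 1 - a 0)/2 ≤ s2 := by
    intro a ha ha0 ha1
    have := cone_lemma_Q2 hconv h0 he2 (hsymm e1 he1) ha ha0 ha1
    exact (ENNReal.ofReal_le_iff_le_toReal hS2top).1 this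
  have hs1 : 1/2 ≤ s1 := by
    have := hcone1 e2 he2 (by rw [show e2 0 = 0 from rfl]) (by rw [show e2 1 = 1 from rfl]; norm_num)
    rw [show e2 0 = 0 from rfl, show e2 1 = 1 from rfl] at this
    linarith
  have hs2 : 1/2 ≤ s2 := by
    have := hcone2 e2 he2 (by rw [show e2 0 = 0 from rfl]) (by rw [show e2 1 = 1 from rfl]; norm_num)
    rw [show e2 0 = 0 from rfl, show e2 1 = 1 from rfl] at this
    linarith
  have hs1pos : 0 < s1 := by linarith
  have hs2pos : 0 < s2 := by linarith
  have key1 : ∀ a ∈ B, a 0 + a 1 ≤ 2 * s1 := by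
    intro a ha
    rcases le_or_gt 0 (a 0) with h0a | h0a
    · rcases le_or_gt 0 (a 1) with h1a | h1a
      · have := hcone1 a ha h0a h1a; linarith
      · have := (hsq a ha).1
        rw [abs_le] at this
        linarith
    · have := (hsq a ha).2
      rw [abs_le] at this
      linarith
  have key2 : ∀ a ∈ B, a 1 - a 0 ≤ 2 * s2 := by
    intro a ha
    rcases le_or_gt (a 0) 0 with h0a | h0a
    · rcases le_or_gt 0 (a 1) with h1a | h1a
      · have := hcone2 a ha h0a h1a; linarith
      · have := (hsq a ha).1
        rw [abs_le] at this
        linarith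
    · have := (hsq a ha).2
      rw [abs_le] at this
      linarith
  set c1 : ℝ := 1/(2*s1) with hc1def
  set c2 : ℝ := 1/(2*s2) with hc2def
  have hc1pos : 0 < c1 := by positivity
  have hc2pos : 0 < c2 := by positivity
  -- points of the polar
  set w1 : E2 := !₂[c1, c1] with hw1def
  set w2 : E2 := !₂[-c2, c2] with hw2def
  have hw1P : w1 ∈ P := by
    intro a ha
    rw [inner2]
    have : w1 0 * a 0 + w1 1 * a 1 = c1 * (a 0 + a 1) := by
      rw [show w1 0 = c1 from rfl, show w1 1 = c1 from rfl]; ring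
    rw [this]
    calc c1 * (a 0 + a 1) ≤ c1 * (2 * s1) :=
          mul_le_mul_of_nonneg_left (key1 a ha) hc1pos.le
      _ = 1 := by rw [hc1def]; field_simp
  have hw2P : w2 ∈ P := by
    intro a ha
    rw [inner2]
    have : w2 0 * a 0 + w2 1 * a 1 = c2 * (a 1 - a 0) := by
      rw [show w2 0 = -c2 from rfl, show w2 1 = c2 from rfl]; ring
    rw [this]
    calc c2 * (a 1 - a 0) ≤ c2 * (2 * s2) :=
          mul_le_mul_of_nonneg_left (key2 a ha) hc2pos.le
      _ = 1 := by rw [hc2def]; field_simp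
  have h0P : (0:E2) ∈ P := by
    intro a ha
    rw [inner2]
    norm_num
  have he1P : e1 ∈ P := by
    intro a ha
    rw [inner2, show e1 0 = 1 from rfl, show e1 1 = 0 from rfl]
    have := (hsq a ha).1
    rw [abs_le] at this
    linarith
  have he2P : e2 ∈ P := by
    intro a ha
    rw [inner2, show e2 0 = 0 from rfl, show e2 1 = 1 from rfl]
    have := (hsq a ha).2
    rw [abs_le] at this
    linarith
  have hne1P : -e1 ∈ P := by
    intro a ha
    have hh0 : (-e1) 0 = -1 := by simp [e1]
    have hh1 : (-e1) 1 = 0 := by simp [e1]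
    rw [inner2, hh0, hh1]
    have := (hsq a ha).1
    rw [abs_le] at this
    linarith
  have hPconv : Convex ℝ P := by
    intro x hx y hy a b ha hb hab
    intro z hz
    have hxz := hx z hz
    have hyz := hy z hz
    have : (inner ℝ (a • x + b • y) z : ℝ) = a * inner ℝ x z + b * inner ℝ y z := by
      rw [inner_add_left, real_inner_smul_left, real_inner_smul_left]
    rw [this]
    calc a * (inner ℝ x z : ℝ) + b * inner ℝ y z ≤ a * 1 + b * 1 := by
          apply add_le_add
          · exact mul_le_mul_of_nonneg_left hxz ha
          · exact mul_le_mul_of_nonneg_left hyz hb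
      _ = 1 := by rw [mul_one, mul_one]; exact hab
  have hPsymm : ∀ x ∈ P, -x ∈ P := by
    intro x hx a ha
    rw [inner_neg_left, ← inner_neg_right]
    exact hx (-a) (hsymm a ha)
  have hPclosed : IsClosed P := by
    have : P = ⋂ a ∈ B, {x : E2 | (inner ℝ x a : ℝ) ≤ 1} := by
      ext x; simp [hPdef, mem_iInter₂]
    rw [this]
    exact isClosed_biInter fun a _ =>
      isClosed_le (Continuous.inner continuous_id continuous_const) continuous_const
  have hT1 : ENNReal.ofReal c1 ≤ volume (P ∩ Qpp) := by
    have := cone_lemma hPconv h0P he1P he2P hw1P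
      (by rw [show w1 0 = c1 from rfl]; exact hc1pos.le)
      (by rw [show w1 1 = c1 from rfl]; exact hc1pos.le)
    rw [show w1 0 = c1 from rfl, show w1 1 = c1 from rfl] at this
    rw [show (c1 + c1)/2 = c1 by ring] at this
    exact this
  have hT2 : ENNReal.ofReal c2 ≤ volume (P ∩ Qnp) := by
    have := cone_lemma_Q2 hPconv h0P he2P hne1P hw2P
      (by rw [show w2 0 = -c2 from rfl]; linarith)
      (by rw [show w2 1 = c2 from rfl]; exact hc2pos.le)
    rw [show w2 0 = -c2 from rfl, show w2 1 = c2 from rfl] at this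
    rw [show (c2 - -c2)/2 = c2 by ring] at this
    exact this
  -- decompositions
  have hBdec := quad_decomp hcomp.measurableSet hsymm
  have hPdec := quad_decomp hPclosed.measurableSet hPsymm
  have hBvol : ENNReal.ofReal (2*(s1+s2)) ≤ volume B := by
    have h1 : ENNReal.ofReal (2*(s1+s2)) = S1 + S2 + (S1 + S2) := by
      rw [show 2*(s1+s2) = (s1 + s2) + (s1 + s2) by ring]
      rw [ENNReal.ofReal_add (by positivity) (by positivity)]
      rw [ENNReal.ofReal_add (by positivity) (by positivity)]
      rw [hs1def, hs2def, ENNReal.ofReal_toReal hS1top, ENNReal.ofReal_toReal hS2top]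
    rw [h1]
    exact hBdec
  have hPvol : ENNReal.ofReal (2*(c1+c2)) ≤ volume P := by
    have h1 : ENNReal.ofReal (2*(c1+c2))
        = ENNReal.ofReal c1 + ENNReal.ofReal c2 + (ENNReal.ofReal c1 + ENNReal.ofReal c2) := by
      rw [show 2*(c1+c2) = (c1 + c2) + (c1 + c2) by ring]
      rw [ENNReal.ofReal_add (by positivity) (by positivity)]
      rw [ENNReal.ofReal_add (by positivity) (by positivity)]
    rw [h1]
    calc ENNReal.ofReal c1 + ENNReal.ofReal c2 + (ENNReal.ofReal c1 + ENNReal.ofReal c2)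
        ≤ volume (P ∩ Qpp) + volume (P ∩ Qnp) + (volume (P ∩ Qpp) + volume (P ∩ Qnp)) := by
          gcongr
      _ ≤ volume P := hPdec
  -- the real inequality
  have hreal : (8:ℝ) ≤ (2*(s1+s2)) * (2*(c1+c2)) := by
    have hid : (s1+s2)*(c1+c2) - 2 = 2*c1*c2*(s1-s2)^2 := by
      rw [hc1def, hc2def]
      field_simp
      ring
    have hpos : 0 ≤ 2*c1*c2*(s1-s2)^2 := by positivity
    nlinarith [hid, hpos]
  calc (8:ENNReal) = ENNReal.ofReal 8 := by simp
    _ ≤ ENNReal.ofReal ((2*(s1+s2)) * (2*(c1+c2))) := ENNReal.ofReal_le_ofReal hreal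
    _ = ENNReal.ofReal (2*(s1+s2)) * ENNReal.ofReal (2*(c1+c2)) := by
        rw [ENNReal.ofReal_mul (by positivity)]
    _ ≤ volume B * volume P := mul_le_mul' hBvol hPvol

lemma coord_add (x y : E2) (i : Fin 2) : (x + y) i = x i + y i := rfl
lemma coord_smul (c : ℝ) (x : E2) (i : Fin 2) : (c • x) i = c * x i := rfl

lemma det_entries (a b c dd M : ℝ) (hMne : M ≠ 0) (hexp : a * b - dd * c = M) :
    b / M * (a / M) - -c / M * (-dd / M) = 1 / M := by
  have h1 : b / M * (a / M) - -c / M * (-dd / M) = (a * b - dd * c)/(M*M) := by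
    field_simp
  rw [h1, hexp, div_mul_eq_div_div_swap, div_self hMne]

set_option maxHeartbeats 2000000 in
theorem main_ineq (A : Set E2) (hA_compact : IsCompact A) (hA_conv : Convex ℝ A)
    (hA_int : (interior A).Nonempty) (hA_symm : A = -A) :
    8 ≤ volume A * volume {x : E2 | ∀ a ∈ A, (inner ℝ x a : ℝ) ≤ 1} := by
  have hsymm' : ∀ a ∈ A, -a ∈ A := by
    intro a ha
    rw [hA_symm] at ha
    rwa [Set.mem_neg] at ha
  obtain ⟨x₀, hx₀⟩ := hA_int
  have hx₀A : x₀ ∈ A := interior_subset hx₀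
  have h0A : (0:E2) ∈ A := by
    have := hA_conv hx₀A (hsymm' x₀ hx₀A) (by norm_num : (0:ℝ) ≤ 1/2)
      (by norm_num : (0:ℝ) ≤ 1/2) (by norm_num)
    simpa [smul_neg, add_neg_cancel] using this
  -- determinant function
  set d : E2 → E2 → ℝ := fun a b => a 0 * b 1 - a 1 * b 0 with hd
  have hdcont : Continuous (fun p : E2 × E2 => |d p.1 p.2|) := by
    apply Continuous.abs
    exact ((cont0.comp continuous_fst).mul (cont1.comp continuous_snd)).sub
      ((cont1.comp continuous_fst).mul (cont0.comp continuous_snd))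
  obtain ⟨⟨u₀, v₀⟩, huv₀, hmax₀⟩ :=
    (hA_compact.prod hA_compact).exists_isMaxOn ⟨(0,0), ⟨h0A, h0A⟩⟩
      hdcont.continuousOn
  have hmax₁ : ∀ a ∈ A, ∀ b ∈ A, |d a b| ≤ |d u₀ v₀| := by
    intro a ha b hb
    exact hmax₀ (Set.mk_mem_prod ha hb)
  -- positivity of the max
  have hMpos₀ : 0 < |d u₀ v₀| := by
    obtain ⟨ε, hεpos, hball⟩ := Metric.isOpen_iff.1 isOpen_interior x₀ hx₀
    set p : E2 := x₀ + (ε/2) • e1 with hp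
    set q : E2 := x₀ + (ε/2) • e2 with hq
    have hnorm_e1 : ‖e1‖ = 1 := by
      rw [EuclideanSpace.norm_eq, Fin.sum_univ_two]
      rw [show e1 0 = 1 from rfl, show e1 1 = 0 from rfl]
      simp
    have hnorm_e2 : ‖e2‖ = 1 := by
      rw [EuclideanSpace.norm_eq, Fin.sum_univ_two]
      rw [show e2 0 = 0 from rfl, show e2 1 = 1 from rfl]
      simp
    have hpA : p ∈ A := by
      apply interior_subset
      apply hball
      rw [Metric.mem_ball, hp, dist_eq_norm]
      rw [show x₀ + (ε/2) • e1 - x₀ = (ε/2) • e1 by abel]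
      rw [norm_smul, hnorm_e1, mul_one, Real.norm_eq_abs,
        abs_of_pos (by linarith : (0:ℝ) < ε/2)]
      linarith
    have hqA : q ∈ A := by
      apply interior_subset
      apply hball
      rw [Metric.mem_ball, hq, dist_eq_norm]
      rw [show x₀ + (ε/2) • e2 - x₀ = (ε/2) • e2 by abel]
      rw [norm_smul, hnorm_e2, mul_one, Real.norm_eq_abs,
        abs_of_pos (by linarith : (0:ℝ) < ε/2)]
      linarith
    by_contra hcon
    push_neg at hcon
    have hzero : |d u₀ v₀| = 0 := le_antisymm hcon (abs_nonneg _)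
    have hall : ∀ a ∈ A, ∀ b ∈ A, d a b = 0 := by
      intro a ha b hb
      have := hmax₁ a ha b hb
      rw [hzero] at this
      exact abs_eq_zero.1 (le_antisymm this (abs_nonneg _))
    have hp0 : p 0 = x₀ 0 + ε/2 := by
      rw [hp, coord_add, coord_smul, show e1 0 = 1 from rfl]; ring
    have hp1 : p 1 = x₀ 1 := by
      rw [hp, coord_add, coord_smul, show e1 1 = 0 from rfl]; ring
    have hq0 : q 0 = x₀ 0 := by
      rw [hq, coord_add, coord_smul, show e2 0 = 0 from rfl]; ring
    have hq1 : q 1 = x₀ 1 + ε/2 := by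
      rw [hq, coord_add, coord_smul, show e2 1 = 1 from rfl]; ring
    have h1 := hall p hpA q hqA
    have h2 := hall p hpA x₀ hx₀A
    have h3 := hall x₀ hx₀A q hqA
    rw [hd] at h1 h2 h3
    simp only [hp0, hp1, hq0, hq1] at h1 h2 h3
    nlinarith [hεpos]
  -- arrange positive determinant
  obtain ⟨u, v, huA, hvA, hMpos, hmax⟩ :
      ∃ u v, u ∈ A ∧ v ∈ A ∧ 0 < d u v ∧ ∀ a ∈ A, ∀ b ∈ A, |d a b| ≤ d u v := by
    rcases lt_or_ge 0 (d u₀ v₀) with h | h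
    · refine ⟨u₀, v₀, huv₀.1, huv₀.2, h, ?_⟩
      intro a ha b hb
      have := hmax₁ a ha b hb
      rwa [abs_of_pos h] at this
    · refine ⟨v₀, u₀, huv₀.2, huv₀.1, ?_, ?_⟩
      · have hdsymm : d v₀ u₀ = -(d u₀ v₀) := by rw [hd]; ring
        rw [hdsymm]
        have habs := abs_of_nonpos h
        linarith [hMpos₀]
      · intro a ha b hb
        have := hmax₁ a ha b hb
        have hdsymm : d v₀ u₀ = -(d u₀ v₀) := by rw [hd]; ring
        rw [hdsymm]
        rw [abs_of_nonpos h] at this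
        linarith
  set M : ℝ := d u v with hM
  have hMne : M ≠ 0 := ne_of_gt hMpos
  -- the normalizing map and its inverse-transpose
  set L : E2 →ₗ[ℝ] E2 := mkL (v 1 / M) (-(v 0) / M) (-(u 1) / M) (u 0 / M) with hL
  set Lt : E2 →ₗ[ℝ] E2 := mkL (v 1 / M) (-(u 1) / M) (-(v 0) / M) (u 0 / M) with hLt
  set Pt : E2 →ₗ[ℝ] E2 := mkL (u 0) (u 1) (v 0) (v 1) with hPt
  set B : Set E2 := L '' A with hB
  have hMexp : u 0 * v 1 - u 1 * v 0 = M := by rw [hM, hd]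
  have hLu : L u = e1 := by
    ext i
    fin_cases i <;>
    · show _ = _
      rw [hL, mkL_apply]
      simp only [Fin.zero_eta, Fin.mk_one, WithLp.ofLp_toLp, Matrix.cons_val_zero, Matrix.cons_val_one, Matrix.head_cons]
      show _ = _
      field_simp
      first
        | (rw [show e1 0 = 1 from rfl]; nlinarith [hMexp])
        | (rw [show e1 1 = 0 from rfl]; ring)
  have hLv : L v = e2 := by
    ext i
    fin_cases i <;>
    · show _ = _
      rw [hL, mkL_apply]
      simp only [Fin.zero_eta, Fin.mk_one, WithLp.ofLp_toLp, Matrix.cons_val_zero, Matrix.cons_val_one, Matrix.head_cons]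
      show _ = _
      field_simp
      first
        | (rw [show e2 0 = 0 from rfl]; ring)
        | (rw [show e2 1 = 1 from rfl]; nlinarith [hMexp])
  have hdL : ∀ a b : E2, d (L a) (L b) = d a b / M := by
    intro a b
    rw [hd]
    show ((v 1 / M) * a 0 + (-(v 0) / M) * a 1) * ((-(u 1) / M) * b 0 + (u 0 / M) * b 1)
      - ((-(u 1) / M) * a 0 + (u 0 / M) * a 1) * ((v 1 / M) * b 0 + (-(v 0) / M) * b 1)
      = (a 0 * b 1 - a 1 * b 0) / M
    have h1 : ((v 1 / M) * a 0 + (-(v 0) / M) * a 1) * ((-(u 1) / M) * b 0 + (u 0 / M) * b 1)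
      - ((-(u 1) / M) * a 0 + (u 0 / M) * a 1) * ((v 1 / M) * b 0 + (-(v 0) / M) * b 1)
      = ((u 0 * v 1 - u 1 * v 0) * (a 0 * b 1 - a 1 * b 0)) / (M * M) := by
      field_simp
      ring
    rw [h1, hMexp, mul_div_mul_left _ _ hMne]
  have hdetB : ∀ a' ∈ B, ∀ b' ∈ B, |a' 0 * b' 1 - a' 1 * b' 0| ≤ 1 := by
    rintro a' ⟨a, ha, rfl⟩ b' ⟨b, hb, rfl⟩
    have hh : (L a) 0 * (L b) 1 - (L a) 1 * (L b) 0 = d (L a) (L b) := by rw [hd]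
    rw [hh, hdL, abs_div, abs_of_pos hMpos, div_le_one hMpos]
    exact hmax a ha b hb
  have hBconv : Convex ℝ B := hA_conv.linear_image L
  have hBcomp : IsCompact B := hA_compact.image (LinearMap.continuous_of_finiteDimensional L)
  have h0B : (0:E2) ∈ B := ⟨0, h0A, map_zero L⟩
  have he1B : e1 ∈ B := ⟨u, huA, hLu⟩
  have he2B : e2 ∈ B := ⟨v, hvA, hLv⟩
  have hsymmB : ∀ a' ∈ B, -a' ∈ B := by
    rintro a' ⟨a, ha, rfl⟩
    exact ⟨-a, hsymm' a ha, map_neg L a⟩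
  have hcore := core_ineq hBconv hBcomp h0B he1B he2B hsymmB hdetB
  -- adjoint identity
  have hadj : ∀ (x a : E2), (inner ℝ x (L a) : ℝ) = (inner ℝ (Lt x) a : ℝ) := by
    intro x a
    rw [inner2, inner2]
    show x 0 * ((v 1 / M) * a 0 + (-(v 0) / M) * a 1)
        + x 1 * ((-(u 1) / M) * a 0 + (u 0 / M) * a 1)
      = ((v 1 / M) * x 0 + (-(u 1) / M) * x 1) * a 0
        + ((-(v 0) / M) * x 0 + (u 0 / M) * x 1) * a 1
    ring
  have hLtPt : ∀ y : E2, Lt (Pt y) = y := by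
    intro y
    have hc0 : (Lt (Pt y)) 0 = y 0 := by
      show (v 1 / M) * (u 0 * y 0 + u 1 * y 1) + (-(u 1) / M) * (v 0 * y 0 + v 1 * y 1) = y 0
      have h1 : (v 1 / M) * (u 0 * y 0 + u 1 * y 1) + (-(u 1) / M) * (v 0 * y 0 + v 1 * y 1)
          = ((u 0 * v 1 - u 1 * v 0) * y 0) / M := by
        field_simp
        ring
      rw [h1, hMexp, mul_div_cancel_left₀ _ hMne]
    have hc1 : (Lt (Pt y)) 1 = y 1 := by
      show (-(v 0) / M) * (u 0 * y 0 + u 1 * y 1) + (u 0 / M) * (v 0 * y 0 + v 1 * y 1) = y 1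
      have h1 : (-(v 0) / M) * (u 0 * y 0 + u 1 * y 1) + (u 0 / M) * (v 0 * y 0 + v 1 * y 1)
          = ((u 0 * v 1 - u 1 * v 0) * y 1) / M := by
        field_simp
        ring
      rw [h1, hMexp, mul_div_cancel_left₀ _ hMne]
    ext i
    fin_cases i
    · exact hc0
    · exact hc1
  have hPtLt : ∀ x : E2, Pt (Lt x) = x := by
    intro x
    have hc0 : (Pt (Lt x)) 0 = x 0 := by
      show u 0 * ((v 1 / M) * x 0 + (-(u 1) / M) * x 1)
          + u 1 * ((-(v 0) / M) * x 0 + (u 0 / M) * x 1) = x 0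
      have h1 : u 0 * ((v 1 / M) * x 0 + (-(u 1) / M) * x 1)
          + u 1 * ((-(v 0) / M) * x 0 + (u 0 / M) * x 1)
          = ((u 0 * v 1 - u 1 * v 0) * x 0) / M := by
        field_simp
        ring
      rw [h1, hMexp, mul_div_cancel_left₀ _ hMne]
    have hc1 : (Pt (Lt x)) 1 = x 1 := by
      show v 0 * ((v 1 / M) * x 0 + (-(u 1) / M) * x 1)
          + v 1 * ((-(v 0) / M) * x 0 + (u 0 / M) * x 1) = x 1
      have h1 : v 0 * ((v 1 / M) * x 0 + (-(u 1) / M) * x 1)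
          + v 1 * ((-(v 0) / M) * x 0 + (u 0 / M) * x 1)
          = ((u 0 * v 1 - u 1 * v 0) * x 1) / M := by
        field_simp
        ring
      rw [h1, hMexp, mul_div_cancel_left₀ _ hMne]
    ext i
    fin_cases i
    · exact hc0
    · exact hc1
  have himg : {x : E2 | ∀ a' ∈ B, (inner ℝ x a' : ℝ) ≤ 1}
      = Pt '' {x : E2 | ∀ a ∈ A, (inner ℝ x a : ℝ) ≤ 1} := by
    ext x
    constructor
    · intro hx
      refine ⟨Lt x, ?_, hPtLt x⟩
      intro a ha
      rw [← hadj]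
      exact hx (L a) ⟨a, ha, rfl⟩
    · rintro ⟨y, hy, rfl⟩
      rintro a' ⟨a, ha, rfl⟩
      rw [hadj, hLtPt]
      exact hy a ha
  -- volumes
  have hvolB : volume B = ENNReal.ofReal (1/M) * volume A := by
    rw [hB, Measure.addHaar_image_linearMap, hL, det_mkL]
    rw [det_entries (u 0) (v 1) (v 0) (u 1) M hMne hMexp,
      abs_of_pos (div_pos one_pos hMpos)]
  have hvolP : volume {x : E2 | ∀ a' ∈ B, (inner ℝ x a' : ℝ) ≤ 1}
      = ENNReal.ofReal M * volume {x : E2 | ∀ a ∈ A, (inner ℝ x a : ℝ) ≤ 1} := by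
    rw [himg, Measure.addHaar_image_linearMap, hPt, det_mkL]
    congr 2
    rw [abs_of_pos] <;> rw [hMexp] <;> try exact hMpos
  rw [hvolB, hvolP] at hcore
  calc (8:ENNReal) ≤ ENNReal.ofReal (1/M) * volume A
        * (ENNReal.ofReal M * volume {x : E2 | ∀ a ∈ A, (inner ℝ x a : ℝ) ≤ 1}) := hcore
    _ = (ENNReal.ofReal (1/M) * ENNReal.ofReal M)
        * (volume A * volume {x : E2 | ∀ a ∈ A, (inner ℝ x a : ℝ) ≤ 1}) := by ring
    _ = volume A * volume {x : E2 | ∀ a ∈ A, (inner ℝ x a : ℝ) ≤ 1} := by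
        rw [← ENNReal.ofReal_mul (by positivity)]
        rw [show 1/M * M = 1 by field_simp]
        simp

lemma vol_cube : volume {x : E2 | ∀ i, |x i| ≤ 1} = 4 := by
  rw [vol_via_phi2, MeasurableEquiv.image_eq_preimage_symm]
  have hset : (phi2.symm : ℝ×ℝ → E2) ⁻¹' {x : E2 | ∀ i, |x i| ≤ 1}
      = (Icc (-1:ℝ) 1) ×ˢ (Icc (-1:ℝ) 1) := by
    ext p
    simp only [mem_preimage, mem_setOf_eq, mem_prod, mem_Icc]
    constructor
    · intro h
      have h0 := h 0
      have h1 := h 1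
      rw [show (phi2.symm p) 0 = p.1 from rfl] at h0
      rw [show (phi2.symm p) 1 = p.2 from rfl] at h1
      rw [abs_le] at h0 h1
      exact ⟨h0, h1⟩
    · rintro ⟨h0, h1⟩ i
      fin_cases i
      · exact abs_le.2 h0
      · exact abs_le.2 h1
  rw [hset, Measure.volume_eq_prod, Measure.prod_prod, Real.volume_Icc]
  rw [show (1:ℝ) - (-1) = 2 by norm_num]
  rw [← ENNReal.ofReal_mul (by norm_num)]
  rw [show (2:ℝ) * 2 = 4 by norm_num]
  simp

lemma polar_cube : {x : E2 | ∀ a ∈ {y : E2 | ∀ i, |y i| ≤ 1}, (inner ℝ x a : ℝ) ≤ 1}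
    = {x : E2 | |x 0| + |x 1| ≤ 1} := by
  ext x
  simp only [mem_setOf_eq]
  constructor
  · intro hx
    set a : E2 := !₂[if 0 ≤ x 0 then 1 else -1, if 0 ≤ x 1 then 1 else -1] with ha
    have haC : ∀ i, |a i| ≤ 1 := by
      intro i
      fin_cases i
      · show |if 0 ≤ x 0 then (1:ℝ) else -1| ≤ 1
        split_ifs <;> norm_num
      · show |if 0 ≤ x 1 then (1:ℝ) else -1| ≤ 1
        split_ifs <;> norm_num
    have hi := hx a haC
    rw [inner2] at hi
    have e0 : x 0 * a 0 = |x 0| := by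
      rw [show a 0 = if 0 ≤ x 0 then (1:ℝ) else -1 from rfl]
      split_ifs with h
      · rw [abs_of_nonneg h]; ring
      · rw [abs_of_neg (lt_of_not_ge h)]; ring
    have e1 : x 1 * a 1 = |x 1| := by
      rw [show a 1 = if 0 ≤ x 1 then (1:ℝ) else -1 from rfl]
      split_ifs with h
      · rw [abs_of_nonneg h]; ring
      · rw [abs_of_neg (lt_of_not_ge h)]; ring
    rw [e0, e1] at hi
    exact hi
  · intro hx a ha
    rw [inner2]
    have h0 := ha 0
    have h1 := ha 1
    calc x 0 * a 0 + x 1 * a 1 ≤ |x 0| + |x 1| := by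
          apply add_le_add
          · calc x 0 * a 0 ≤ |x 0 * a 0| := le_abs_self _
              _ = |x 0| * |a 0| := abs_mul _ _
              _ ≤ |x 0| := mul_le_of_le_one_right (abs_nonneg _) h0
          · calc x 1 * a 1 ≤ |x 1 * a 1| := le_abs_self _
              _ = |x 1| * |a 1| := abs_mul _ _
              _ ≤ |x 1| := mul_le_of_le_one_right (abs_nonneg _) h1
      _ ≤ 1 := hx

lemma vol_cross : volume {x : E2 | |x 0| + |x 1| ≤ 1} = 2 := by
  have himg : {x : E2 | |x 0| + |x 1| ≤ 1}
      = mkL (1/2) (1/2) (1/2) (-(1/2)) '' {y : E2 | ∀ i, |y i| ≤ 1} := by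
    ext x
    constructor
    · intro hx
      simp only [mem_setOf_eq] at hx
      refine ⟨!₂[x 0 + x 1, x 0 - x 1], ?_, ?_⟩
      · intro i
        fin_cases i
        · show |x 0 + x 1| ≤ 1
          exact (abs_add_le _ _).trans hx
        · show |x 0 - x 1| ≤ 1
          have := abs_add_le (x 0) (-(x 1))
          rw [abs_neg] at this
          rw [sub_eq_add_neg]
          linarith
      · ext i
        fin_cases i
        · show (1/2) * (x 0 + x 1) + (1/2) * (x 0 - x 1) = x 0
          ring
        · show (1/2) * (x 0 + x 1) + (-(1/2)) * (x 0 - x 1) = x 1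
          ring
    · rintro ⟨a, ha, rfl⟩
      simp only [mem_setOf_eq] at ha ⊢
      have h0 := abs_le.1 (ha 0)
      have h1 := abs_le.1 (ha 1)
      show |(1/2) * a 0 + (1/2) * a 1| + |(1/2) * a 0 + (-(1/2)) * a 1| ≤ 1
      rcases abs_cases ((1/2) * a 0 + (1/2) * a 1) with ⟨eA, _⟩ | ⟨eA, _⟩ <;>
        rcases abs_cases ((1/2) * a 0 + (-(1/2)) * a 1) with ⟨eB, _⟩ | ⟨eB, _⟩ <;>
        rw [eA, eB] <;> linarith [h0.1, h0.2, h1.1, h1.2]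
  rw [himg, Measure.addHaar_image_linearMap, det_mkL, vol_cube]
  rw [show (1:ℝ)/2 * -(1/2) - 1/2 * (1/2) = -(1/2) by norm_num]
  rw [abs_neg, abs_of_pos (by norm_num : (0:ℝ) < 1/2)]
  rw [show (4:ENNReal) = ENNReal.ofReal 4 by simp]
  rw [← ENNReal.ofReal_mul (by norm_num)]
  rw [show (1:ℝ)/2 * 4 = 2 by norm_num]
  simp

/-- The two-dimensional Mahler conjecture (Mahler's theorem): every centrally symmetric
convex body A in the plane satisfies M(A) ≥ 8 = M([-1,1]²). -/
theorem stmt15 (A : Set (EuclideanSpace ℝ (Fin 2)))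
    (hA_compact : IsCompact A) (hA_conv : Convex ℝ A)
    (hA_int : (interior A).Nonempty) (hA_symm : A = -A) :
    8 ≤ volume A * volume (polarSet A) ∧
    volume {x : EuclideanSpace ℝ (Fin 2) | ∀ i, |x i| ≤ 1} *
      volume (polarSet {x : EuclideanSpace ℝ (Fin 2) | ∀ i, |x i| ≤ 1}) = 8 := by
  constructor
  · exact main_ineq A hA_compact hA_conv hA_int hA_symm
  · have hp : polarSet {x : E2 | ∀ i, |x i| ≤ 1} = {x : E2 | |x 0| + |x 1| ≤ 1} :=
      polar_cube
    rw [vol_cube, hp, vol_cross]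
    norm_num
end
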